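/- arXiv:1804.02578 — 6 statements merged into one kernel-verified Lean document; each statement's English description precedes it below -/
import Mathlib

section
/- The map φ : S_{k,ℓ} → Y_{ℓ,k} × Y_{ℓ,k} defined by φ(a) = (R_a, V_a) is a bijection between the set of permutations of {1,...,kℓ} avoiding increasing subsequences of length k+1 and decreasing subsequences of length ℓ+1, and pairs of ℓ×k rectangular standard Young tableaux. -/
/-- Length of the longest decreasing subsequence of `a` ending at the `t`-th
entry (1-based) of `a`. -/
noncomputable def gridI (a : List ℕ) (t : ℕ) : ℕ :=
  sSup {r | ∃ s : List ℕ, s.Sublist (a.take t) ∧ s.length = r ∧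
    s.getLast? = a[t-1]? ∧ s.Pairwise (· > ·)}

/-- Length of the longest increasing subsequence of `a` ending at the `t`-th
entry (1-based) of `a`. -/
noncomputable def gridJ (a : List ℕ) (t : ℕ) : ℕ :=
  sSup {r | ∃ s : List ℕ, s.Sublist (a.take t) ∧ s.length = r ∧
    s.getLast? = a[t-1]? ∧ s.Pairwise (· < ·)}

/-- The (1-based) position in `a` where the grid function takes value `(i,j)`. -/
noncomputable def gridInv (a : List ℕ) (i j : ℕ) : ℕ :=
  sInf {t | 1 ≤ t ∧ gridI a t = i ∧ gridJ a t = j}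

/-- The set `S_{k,ℓ}`: permutations of `{1,…,kℓ}` with no increasing subsequence
of length `k+1` and no decreasing subsequence of length `ℓ+1`. -/
def PermSet (k ℓ : ℕ) : Set (List ℕ) :=
  {a | a.Perm (List.range' 1 (k*ℓ)) ∧
    (¬ ∃ s : List ℕ, s.Sublist a ∧ s.length = k+1 ∧ s.Pairwise (· < ·)) ∧
    (¬ ∃ s : List ℕ, s.Sublist a ∧ s.length = ℓ+1 ∧ s.Pairwise (· > ·))}

/-- The set `Y_{ℓ,k}` of rectangular `ℓ × k` standard Young tableaux. -/
def YSet (ℓ k : ℕ) : Set (Matrix (Fin ℓ) (Fin k) ℕ) :=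
  {M | Set.BijOn (fun p : Fin ℓ × Fin k => M p.1 p.2) Set.univ
        (↑(Finset.Icc 1 (k*ℓ)) : Set ℕ) ∧
    (∀ i, StrictMono (M i)) ∧ (∀ j, StrictMono (fun i => M i j))}

/-- The grid-ranking `R_a` of a sequence `a`. -/
noncomputable def gridRanking (ℓ k : ℕ) (a : List ℕ) : Matrix (Fin ℓ) (Fin k) ℕ :=
  Matrix.of fun i j => gridInv a (i.1 + 1) (j.1 + 1)

/-- The grid-valuation `V_a` of a sequence `a`. -/
noncomputable def gridValuation (ℓ k : ℕ) (a : List ℕ) : Matrix (Fin ℓ) (Fin k) ℕ :=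
  Matrix.of fun i j => a.getD (gridInv a (ℓ - i.1) (j.1 + 1) - 1) 0

def gset (r : ℕ → ℕ → Prop) (a : List ℕ) (t : ℕ) : Set ℕ :=
  {m | ∃ s : List ℕ, s.Sublist (a.take t) ∧ s.length = m ∧
    s.getLast? = a[t-1]? ∧ s.Pairwise r}

noncomputable def grid (r : ℕ → ℕ → Prop) (a : List ℕ) (t : ℕ) : ℕ := sSup (gset r a t)

theorem gridI_eq_grid (a t) : gridI a t = grid (· > ·) a t := rfl
theorem gridJ_eq_grid (a t) : gridJ a t = grid (· < ·) a t := rfl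

theorem gset_bddAbove (r a t) : BddAbove (gset r a t) := by
  refine ⟨t, fun m hm => ?_⟩
  obtain ⟨s, hs, rfl, -, -⟩ := hm
  calc s.length ≤ (a.take t).length := hs.length_le
  _ ≤ t := by simp

theorem mem_gset_one (r : ℕ → ℕ → Prop) (a : List ℕ) (p : ℕ) (hp : p < a.length) :
    1 ∈ gset r a (p+1) := by
  refine ⟨[a[p]], ?_, rfl, by simp, by simp⟩
  rw [List.take_succ]
  have h1 : a[p]? = some a[p] := List.getElem?_eq_getElem hp
  simp only [h1, Option.toList_some]
  exact ((List.nil_sublist _).append (List.Sublist.refl _))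

theorem one_le_grid (r : ℕ → ℕ → Prop) (a : List ℕ) (p : ℕ) (hp : p < a.length) :
    1 ≤ grid r a (p+1) :=
  le_csSup (gset_bddAbove r a (p+1)) (mem_gset_one r a p hp)

theorem grid_spec (r : ℕ → ℕ → Prop) (a : List ℕ) (p : ℕ) (hp : p < a.length) :
    grid r a (p+1) ∈ gset r a (p+1) :=
  Nat.sSup_mem ⟨1, mem_gset_one r a p hp⟩ (gset_bddAbove r a (p+1))

theorem grid_le (r : ℕ → ℕ → Prop) (a : List ℕ) (t m : ℕ)
    (h : ∀ x ∈ gset r a t, x ≤ m) : grid r a t ≤ m :=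
by
  rcases Set.eq_empty_or_nonempty (gset r a t) with he | hne
  · rw [grid, he, csSup_empty]; exact Nat.zero_le m
  · exact csSup_le hne h

theorem grid_eq_zero (r : ℕ → ℕ → Prop) (a : List ℕ) (t : ℕ) (ht : 1 ≤ t)
    (hlen : a.length < t) : grid r a t = 0 := by
  refine Nat.le_zero.mp (grid_le r a t 0 ?_)
  rintro x ⟨s, -, rfl, hlast, -⟩
  rw [List.getElem?_eq_none (by omega)] at hlast
  simp [List.getLast?_eq_none_iff.mp hlast]

/-- If `w ++ [x]` is a sublist of nodup `a` and `x = a[p]`, then `w` is a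
sublist of `a.take p`. -/
theorem sublist_take_of_concat_sublist {a w : List ℕ} {x : ℕ} {p : ℕ}
    (hnd : a.Nodup) (hw : (w ++ [x]).Sublist a) (hp : p < a.length) (hx : a[p] = x) :
    w.Sublist (a.take p) := by
  obtain ⟨a₁, a₂, rfl, hw1, hx2⟩ := List.append_sublist_iff.mp hw
  have hxmem : x ∈ a₂ := (List.singleton_sublist.mp hx2)
  have hlen : a₁.length ≤ p := by
    by_contra hlt
    push_neg at hlt
    have : (a₁ ++ a₂)[p] = a₁[p]'hlt := List.getElem_append_left hlt
    rw [hx] at this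
    have hxa1 : x ∈ a₁ := this ▸ List.getElem_mem hlt
    exact (List.disjoint_of_nodup_append hnd) hxa1 hxmem
  have : (a₁ ++ a₂).take p = a₁ ++ a₂.take (p - a₁.length) := by
    rw [List.take_append, List.take_of_length_le hlen]
  rw [this]
  exact hw1.trans (List.sublist_append_left _ _)

/-- Extension: if `p < q`, `r a[p] a[q]`, then grid strictly grows. -/
theorem grid_lt_grid {r : ℕ → ℕ → Prop} [IsTrans ℕ r] {a : List ℕ} {p q : ℕ}
    (hpq : p < q) (hq : q < a.length) (hr : r a[p] a[q]) :
    grid r a (p+1) + 1 ≤ grid r a (q+1) := by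
  have hp : p < a.length := hpq.trans hq
  obtain ⟨w, hsub, hlen, hlast, hsort⟩ := grid_spec r a p hp
  have hgl : a[p]? = some a[p] := List.getElem?_eq_getElem hp
  rw [Nat.add_sub_cancel, hgl] at hlast
  -- w ++ [a[q]] is a witness at q
  have hsub2 : (w ++ [a[q]]).Sublist (a.take (q+1)) := by
    have h1 : (a.take (p+1)).Sublist (a.take q) := by
      have : (a.take q).take (p+1) = a.take (p+1) := by
        rw [List.take_take]; congr 1; omega
      rw [← this]; exact List.take_sublist _ _
    have h2 : a.take (q+1) = a.take q ++ [a[q]] := by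
      rw [List.take_succ, List.getElem?_eq_getElem hq, Option.toList_some]
    rw [h2]
    exact (hsub.trans h1).append (List.Sublist.refl _)
  have hmemw : ∀ x ∈ w, r x a[q] := by
    obtain ⟨w', rfl⟩ := List.getLast?_eq_some_iff.mp hlast
    intro x hx
    rcases List.mem_append.mp hx with hx' | hx'
    · have : r x a[p] := by
        have := (List.pairwise_append.mp hsort).2.2
        exact this x hx' a[p] (by simp)
      exact Trans.trans this hr
    · rw [List.mem_singleton.mp hx']
      exact hr
  have hmem : w.length + 1 ∈ gset r a (q+1) := by
    refine ⟨w ++ [a[q]], hsub2, by simp, ?_, ?_⟩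
    · simp [List.getElem?_eq_getElem hq]
    · rw [List.pairwise_append]
      exact ⟨hsort, List.pairwise_singleton _ _, fun x hx b hb => by
        rw [List.mem_singleton.mp hb]; exact hmemw x hx⟩
  rw [hlen] at hmem
  exact le_csSup (gset_bddAbove r a (q+1)) hmem

/-- Predecessor lemma. -/
theorem exists_pred {r : ℕ → ℕ → Prop} [IsIrrefl ℕ r] {a : List ℕ} {q : ℕ}
    (hnd : a.Nodup) (hq : q < a.length) (h2 : 2 ≤ grid r a (q+1)) :
    ∃ p, ∃ hpq : p < q, r (a[p]'(lt_trans hpq hq)) a[q] ∧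
      grid r a (q+1) ≤ grid r a (p+1) + 1 := by
  obtain ⟨w, hsub, hlen, hlast, hsort⟩ := grid_spec r a q hq
  rw [Nat.add_sub_cancel, List.getElem?_eq_getElem hq] at hlast
  obtain ⟨w₀, rfl⟩ := List.getLast?_eq_some_iff.mp hlast
  rcases List.eq_nil_or_concat w₀ with rfl | ⟨w₁, y, rfl⟩
  · simp at hlen; omega
  rw [List.concat_eq_append] at hsub hlen hsort
  have hry : r y a[q] := by
    have := (List.pairwise_append.mp (hsort : List.Pairwise r _)).2.2
    exact this y (by simp) a[q] (by simp)
  have hymem : y ∈ a.take (q+1) := hsub.subset (by simp)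
  obtain ⟨p, hplen, hpy⟩ := List.mem_iff_getElem.mp hymem
  have hplen' : p < a.length := by
    have := hplen; rw [List.length_take] at this; omega
  have hpq' : p ≤ q := by
    have := hplen; rw [List.length_take] at this; omega
  have hay : a[p] = y := by rw [← hpy, List.getElem_take]
  have hyne : y ≠ a[q] := fun h => irrefl a[q] (h ▸ hry)
  have hplt : p < q := by
    rcases lt_or_eq_of_le hpq' with h | h
    · exact h
    · exfalso; subst h; exact hyne hay.symm

  have h1 : (w₁ ++ [y]).Sublist a :=
    ((List.sublist_append_left _ _).trans hsub).trans (List.take_sublist _ _)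
  have h2 : w₁.Sublist (a.take p) := sublist_take_of_concat_sublist hnd h1 hplen' hay
  have h3 : (w₁ ++ [y]).Sublist (a.take (p+1)) := by
    rw [List.take_succ, List.getElem?_eq_getElem hplen', Option.toList_some, hay]
    exact h2.append (List.Sublist.refl _)
  have hmem : w₁.length + 1 ∈ gset r a (p+1) := by
    refine ⟨w₁ ++ [y], h3, by simp, ?_, ?_⟩
    · simp [List.getElem?_eq_getElem hplen', hay]
    · exact List.Pairwise.sublist (List.sublist_append_left _ _) hsort
  have hle : w₁.length + 1 ≤ grid r a (p+1) := le_csSup (gset_bddAbove r a (p+1)) hmem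
  refine ⟨p, hplt, hay ▸ hry, ?_⟩
  rw [← hlen]
  simp only [List.length_append, List.length_singleton]
  omega

/-- If there is no `r`-sorted sublist of `a` of length `m+1` then all grid
values are at most `m`. -/
theorem grid_le_of_not_exists {r : ℕ → ℕ → Prop} {a : List ℕ} {m : ℕ}
    (h : ¬ ∃ s : List ℕ, s.Sublist a ∧ s.length = m+1 ∧ s.Pairwise r) (t : ℕ) :
    grid r a t ≤ m := by
  refine grid_le r a t m ?_
  rintro x ⟨s, hsub, rfl, -, hsort⟩
  by_contra hgt
  push_neg at hgt
  refine h ⟨s.take (m+1), ?_, ?_, ?_⟩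
  · exact ((List.take_sublist _ _).trans hsub).trans (List.take_sublist _ _)
  · rw [List.length_take]; omega
  · exact List.Pairwise.sublist (List.take_sublist _ _) hsort

/-- Conversely, a sorted sublist ending somewhere gives a large grid value. -/
theorem exists_grid_ge_of_sorted_sublist {r : ℕ → ℕ → Prop} {a s : List ℕ}
    (hnd : a.Nodup) (hsub : s.Sublist a) (hne : s ≠ []) (hsort : s.Pairwise r) :
    ∃ p, p < a.length ∧ s.length ≤ grid r a (p+1) := by
  rcases List.eq_nil_or_concat s with rfl | ⟨s', x, rfl⟩
  · exact absurd rfl hne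
  rw [List.concat_eq_append] at hsub hsort ⊢
  have hxmem : x ∈ a := hsub.subset (by simp)
  obtain ⟨p, hplen, hpx⟩ := List.mem_iff_getElem.mp hxmem
  have h2 : s'.Sublist (a.take p) := sublist_take_of_concat_sublist hnd hsub hplen hpx
  have h3 : (s' ++ [x]).Sublist (a.take (p+1)) := by
    rw [List.take_succ, List.getElem?_eq_getElem hplen, Option.toList_some, hpx]
    exact h2.append (List.Sublist.refl _)
  have hmem : (s' ++ [x]).length ∈ gset r a (p+1) :=
    ⟨s' ++ [x], h3, rfl, by simp [List.getElem?_eq_getElem hplen, hpx], hsort⟩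
  exact ⟨p, hplen, le_csSup (gset_bddAbove r a (p+1)) hmem⟩

theorem classI {a : List ℕ} {p q : ℕ} (hnd : a.Nodup) (hpq : p < q) (hq : q < a.length)
    (h : gridI a (p+1) = gridI a (q+1)) :
    a[p]'(hpq.trans hq) < a[q] ∧ gridJ a (p+1) < gridJ a (q+1) := by
  have hp : p < a.length := hpq.trans hq
  have hne : a[p] ≠ a[q] := fun hh => absurd ((hnd.getElem_inj_iff).mp hh) (Nat.ne_of_lt hpq)
  have hlt : a[p] < a[q] := by
    rcases lt_or_gt_of_ne hne with h' | h'
    · exact h'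
    · exfalso
      have := grid_lt_grid (r := (· > ·)) hpq hq h'
      rw [← gridI_eq_grid, ← gridI_eq_grid] at this
      omega
  exact ⟨hlt, by
    have := grid_lt_grid (r := (· < ·)) hpq hq hlt
    rw [← gridJ_eq_grid, ← gridJ_eq_grid] at this
    omega⟩

theorem classJ {a : List ℕ} {p q : ℕ} (hnd : a.Nodup) (hpq : p < q) (hq : q < a.length)
    (h : gridJ a (p+1) = gridJ a (q+1)) :
    a[q] < a[p]'(hpq.trans hq) ∧ gridI a (p+1) < gridI a (q+1) := by
  have hp : p < a.length := hpq.trans hq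
  have hne : a[p] ≠ a[q] := fun hh => absurd ((hnd.getElem_inj_iff).mp hh) (Nat.ne_of_lt hpq)
  have hlt : a[q] < a[p] := by
    rcases lt_or_gt_of_ne hne with h' | h'
    · exfalso
      have := grid_lt_grid (r := (· < ·)) hpq hq h'
      rw [← gridJ_eq_grid, ← gridJ_eq_grid] at this
      omega
    · exact h'
  exact ⟨hlt, by
    have := grid_lt_grid (r := (· > ·)) hpq hq hlt
    rw [← gridI_eq_grid, ← gridI_eq_grid] at this
    omega⟩

theorem grid_inj {a : List ℕ} {p q : ℕ} (hnd : a.Nodup) (hp : p < a.length)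
    (hq : q < a.length) (hI : gridI a (p+1) = gridI a (q+1))
    (hJ : gridJ a (p+1) = gridJ a (q+1)) : p = q := by
  rcases lt_trichotomy p q with h | h | h
  · exact absurd hJ (Nat.ne_of_lt (classI hnd h hq hI).2)
  · exact h
  · exact absurd hJ.symm (Nat.ne_of_lt (classI hnd h hp hI.symm).2)

theorem gridInv_eq {a : List ℕ} {p i j : ℕ} (hnd : a.Nodup) (hp : p < a.length)
    (hi : gridI a (p+1) = i) (hj : gridJ a (p+1) = j) (hi1 : 1 ≤ i) :
    gridInv a i j = p + 1 := by
  have hmem : p + 1 ∈ {t | 1 ≤ t ∧ gridI a t = i ∧ gridJ a t = j} := ⟨by omega, hi, hj⟩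
  have huniq : ∀ t ∈ {t | 1 ≤ t ∧ gridI a t = i ∧ gridJ a t = j}, t = p + 1 := by
    rintro t ⟨ht1, hti, htj⟩
    have htlen : t ≤ a.length := by
      by_contra hgt
      push_neg at hgt
      have := grid_eq_zero (· > ·) a t ht1 hgt
      rw [← gridI_eq_grid] at this
      omega
    obtain ⟨u, rfl⟩ : ∃ u, t = u + 1 := ⟨t - 1, by omega⟩
    have hu : u < a.length := by omega
    rw [grid_inj hnd hu hp (by rw [hti, hi]) (by rw [htj, hj])]
  have h1 : gridInv a i j ∈ _ := Nat.sInf_mem (⟨p+1, hmem⟩ :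
    Set.Nonempty {t | 1 ≤ t ∧ gridI a t = i ∧ gridJ a t = j})
  exact huniq _ h1

section PermFacts
variable {k ℓ : ℕ} {a : List ℕ}

theorem permLen (ha : a ∈ PermSet k ℓ) : a.length = k * ℓ := by
  have := ha.1.length_eq; simpa using this

theorem permNodup (ha : a ∈ PermSet k ℓ) : a.Nodup :=
  ha.1.nodup_iff.mpr List.nodup_range'

theorem permMem (ha : a ∈ PermSet k ℓ) {x : ℕ} :
    x ∈ a ↔ 1 ≤ x ∧ x ≤ k * ℓ := by
  rw [ha.1.mem_iff, List.mem_range'_1]; omega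

theorem permGridI_le (ha : a ∈ PermSet k ℓ) (t : ℕ) : gridI a t ≤ ℓ := by
  rw [gridI_eq_grid]; exact grid_le_of_not_exists ha.2.2 t

theorem permGridJ_le (ha : a ∈ PermSet k ℓ) (t : ℕ) : gridJ a t ≤ k := by
  rw [gridJ_eq_grid]; exact grid_le_of_not_exists ha.2.1 t

theorem permExistsCell (ha : a ∈ PermSet k ℓ) {i j : ℕ} (hi : i < ℓ) (hj : j < k) :
    ∃ p, p < a.length ∧ gridI a (p+1) = i+1 ∧ gridJ a (p+1) = j+1 := by
  classical
  have hlen := permLen ha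
  have hnd := permNodup ha
  have key := Finset.surj_on_of_inj_on_of_card_le
    (s := Finset.range a.length) (t := Finset.Icc 1 ℓ ×ˢ Finset.Icc 1 k)
    (fun p _ => (gridI a (p+1), gridJ a (p+1)))
    (fun p hp => by
      rw [Finset.mem_range] at hp
      simp only [Finset.mem_product, Finset.mem_Icc]
      refine ⟨⟨?_, permGridI_le ha _⟩, ?_, permGridJ_le ha _⟩
      · rw [gridI_eq_grid]; exact one_le_grid _ a p hp
      · rw [gridJ_eq_grid]; exact one_le_grid _ a p hp)
    (fun p q hp hq hpq => by
      rw [Finset.mem_range] at hp hq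
      exact grid_inj hnd hp hq (congrArg Prod.fst hpq) (congrArg Prod.snd hpq))
    (by simp [hlen, Nat.mul_comm k ℓ])
  obtain ⟨p, hp, hfp⟩ := key (i+1, j+1) (by
    rw [Finset.mem_product, Finset.mem_Icc, Finset.mem_Icc]; omega)
  rw [Finset.mem_range] at hp
  exact ⟨p, hp, (Prod.mk.injEq _ _ _ _ ▸ hfp.symm).1, (Prod.mk.injEq _ _ _ _ ▸ hfp.symm).2⟩

theorem cellSpec (ha : a ∈ PermSet k ℓ) {i j : ℕ} (hi : i < ℓ) (hj : j < k) :
    ∃ p, gridInv a (i+1) (j+1) = p + 1 ∧ p < a.length ∧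
      gridI a (p+1) = i+1 ∧ gridJ a (p+1) = j+1 := by
  obtain ⟨p, hp, hI, hJ⟩ := permExistsCell ha hi hj
  exact ⟨p, gridInv_eq (permNodup ha) hp hI hJ (by omega), hp, hI, hJ⟩

end PermFacts

section Maps
variable {k ℓ : ℕ} {a : List ℕ}

theorem rank_entry (ha : a ∈ PermSet k ℓ) (i : Fin ℓ) (j : Fin k) :
    ∃ p, p < a.length ∧ gridRanking ℓ k a i j = p + 1 ∧
      gridI a (p+1) = i.1+1 ∧ gridJ a (p+1) = j.1+1 := by
  obtain ⟨p, hinv, hp, hI, hJ⟩ := cellSpec ha i.2 j.2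
  exact ⟨p, hp, hinv, hI, hJ⟩

theorem val_entry (ha : a ∈ PermSet k ℓ) (i : Fin ℓ) (j : Fin k) :
    ∃ p, ∃ hp : p < a.length, gridValuation ℓ k a i j = a[p] ∧
      gridI a (p+1) = ℓ - i.1 ∧ gridJ a (p+1) = j.1+1 := by
  have hi : ℓ - 1 - i.1 < ℓ := by omega
  obtain ⟨p, hinv, hp, hI, hJ⟩ := cellSpec ha hi j.2
  have hrow : ℓ - 1 - i.1 + 1 = ℓ - i.1 := by omega
  rw [hrow] at hinv hI
  refine ⟨p, hp, ?_, hI, hJ⟩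
  show a.getD (gridInv a (ℓ - i.1) (j.1 + 1) - 1) 0 = a[p]
  rw [hinv, Nat.add_sub_cancel, List.getD_eq_getElem a 0 hp]

theorem rank_mem_YSet (ha : a ∈ PermSet k ℓ) : gridRanking ℓ k a ∈ YSet ℓ k := by
  have hnd := permNodup ha
  have hlen := permLen ha
  refine ⟨⟨?_, ?_, ?_⟩, ?_, ?_⟩
  · -- MapsTo
    rintro ⟨i, j⟩ -
    obtain ⟨p, hp, he, -, -⟩ := rank_entry ha i j
    simp only [Finset.coe_Icc, Set.mem_Icc, he]
    omega
  · -- InjOn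
    rintro ⟨i, j⟩ - ⟨i', j'⟩ - hee
    obtain ⟨p, hp, he, hI, hJ⟩ := rank_entry ha i j
    obtain ⟨p', hp', he', hI', hJ'⟩ := rank_entry ha i' j'
    simp only at hee
    rw [he, he'] at hee
    have hpp : p = p' := by omega
    subst hpp
    have : i.1 = i'.1 := by rw [hI] at hI'; omega
    have h2 : j.1 = j'.1 := by rw [hJ] at hJ'; omega
    simp [Prod.ext_iff, Fin.ext_iff, this, h2]
  · -- SurjOn
    intro t ht
    simp only [Finset.coe_Icc, Set.mem_Icc] at ht
    have hp : t - 1 < a.length := by omega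
    set i' := gridI a (t-1+1) with hi'
    set j' := gridJ a (t-1+1) with hj'
    have hi1 : 1 ≤ i' := by rw [hi', gridI_eq_grid]; exact one_le_grid _ a _ hp
    have hj1 : 1 ≤ j' := by rw [hj', gridJ_eq_grid]; exact one_le_grid _ a _ hp
    have hile : i' ≤ ℓ := permGridI_le ha _
    have hjle : j' ≤ k := permGridJ_le ha _
    refine ⟨(⟨i'-1, by omega⟩, ⟨j'-1, by omega⟩), Set.mem_univ _, ?_⟩
    show gridInv a (i'-1+1) (j'-1+1) = t
    rw [show i'-1+1 = i' by omega, show j'-1+1 = j' by omega]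
    rw [gridInv_eq hnd hp rfl rfl hi1]
    omega
  · -- rows strictly increasing
    intro i j j' hjj
    obtain ⟨p, hp, he, hI, hJ⟩ := rank_entry ha i j
    obtain ⟨p', hp', he', hI', hJ'⟩ := rank_entry ha i j'
    show gridRanking ℓ k a i j < gridRanking ℓ k a i j'
    rw [he, he']
    have hne : p ≠ p' := fun hh => by subst hh; rw [hJ] at hJ'; exact absurd (by omega : j.1 = j'.1) (Nat.ne_of_lt hjj)
    rcases lt_or_gt_of_ne hne with h | h
    · omega
    · exfalso
      have := (classI hnd h hp (by rw [hI, hI'])).2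
      rw [hJ, hJ'] at this
      omega
  · -- columns strictly increasing
    intro j i i' hii
    obtain ⟨p, hp, he, hI, hJ⟩ := rank_entry ha i j
    obtain ⟨p', hp', he', hI', hJ'⟩ := rank_entry ha i' j
    show gridRanking ℓ k a i j < gridRanking ℓ k a i' j
    rw [he, he']
    have hne : p ≠ p' := fun hh => by subst hh; rw [hI] at hI'; exact absurd (by omega : i.1 = i'.1) (Nat.ne_of_lt hii)
    rcases lt_or_gt_of_ne hne with h | h
    · omega
    · exfalso
      have := (classJ hnd h hp (by rw [hJ, hJ'])).2
      rw [hI, hI'] at this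
      omega

theorem val_mem_YSet (ha : a ∈ PermSet k ℓ) : gridValuation ℓ k a ∈ YSet ℓ k := by
  have hnd := permNodup ha
  have hlen := permLen ha
  refine ⟨⟨?_, ?_, ?_⟩, ?_, ?_⟩
  · -- MapsTo
    rintro ⟨i, j⟩ -
    obtain ⟨p, hp, he, -, -⟩ := val_entry ha i j
    simp only [Finset.coe_Icc, Set.mem_Icc, he]
    exact (permMem ha).mp (List.getElem_mem hp)
  · -- InjOn
    rintro ⟨i, j⟩ - ⟨i', j'⟩ - hee
    obtain ⟨p, hp, he, hI, hJ⟩ := val_entry ha i j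
    obtain ⟨p', hp', he', hI', hJ'⟩ := val_entry ha i' j'
    simp only at hee
    rw [he, he'] at hee
    have hpp : p = p' := hnd.getElem_inj_iff.mp hee
    subst hpp
    have h1 : i.1 = i'.1 := by rw [hI] at hI'; omega
    have h2 : j.1 = j'.1 := by rw [hJ] at hJ'; omega
    simp [Prod.ext_iff, Fin.ext_iff, h1, h2]
  · -- SurjOn
    intro v hv
    simp only [Finset.coe_Icc, Set.mem_Icc] at hv
    have hvmem : v ∈ a := (permMem ha).mpr hv
    obtain ⟨p, hp, hpv⟩ := List.mem_iff_getElem.mp hvmem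
    set i' := gridI a (p+1) with hi'
    set j' := gridJ a (p+1) with hj'
    have hi1 : 1 ≤ i' := by rw [hi', gridI_eq_grid]; exact one_le_grid _ a _ hp
    have hj1 : 1 ≤ j' := by rw [hj', gridJ_eq_grid]; exact one_le_grid _ a _ hp
    have hile : i' ≤ ℓ := permGridI_le ha _
    have hjle : j' ≤ k := permGridJ_le ha _
    refine ⟨(⟨ℓ - i', by omega⟩, ⟨j'-1, by omega⟩), Set.mem_univ _, ?_⟩
    show a.getD (gridInv a (ℓ - (ℓ - i')) (j'-1+1) - 1) 0 = v
    rw [show ℓ - (ℓ - i') = i' by omega, show j'-1+1 = j' by omega]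
    rw [gridInv_eq hnd hp rfl rfl hi1, Nat.add_sub_cancel, List.getD_eq_getElem a 0 hp]
    exact hpv
  · -- rows strictly increasing
    intro i j j' hjj
    obtain ⟨p, hp, he, hI, hJ⟩ := val_entry ha i j
    obtain ⟨p', hp', he', hI', hJ'⟩ := val_entry ha i j'
    show gridValuation ℓ k a i j < gridValuation ℓ k a i j'
    rw [he, he']
    have hne : p ≠ p' := fun hh => by subst hh; rw [hJ] at hJ'; exact absurd (by omega : j.1 = j'.1) (Nat.ne_of_lt hjj)
    rcases lt_or_gt_of_ne hne with h | h
    · exact (classI hnd h hp' (by rw [hI, hI'])).1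
    · exfalso
      have hjj' : j.1 < j'.1 := hjj
      have := (classI hnd h hp (by rw [hI', hI])).2
      rw [hJ', hJ] at this
      omega
  · -- columns strictly increasing
    intro j i i' hii
    obtain ⟨p, hp, he, hI, hJ⟩ := val_entry ha i j
    obtain ⟨p', hp', he', hI', hJ'⟩ := val_entry ha i' j
    show gridValuation ℓ k a i j < gridValuation ℓ k a i' j
    rw [he, he']
    have hlt : ℓ - i'.1 < ℓ - i.1 := by have := i'.2; omega
    have hne : p ≠ p' := fun hh => by subst hh; rw [hI] at hI'; omega
    rcases lt_or_gt_of_ne hne with h | h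
    · exfalso
      have := (classJ hnd h hp' (by rw [hJ, hJ'])).2
      rw [hI, hI'] at this
      omega
    · exact (classJ hnd h hp (by rw [hJ, hJ'])).1

end Maps

set_option maxHeartbeats 1000000 in
theorem phi_injOn {k ℓ : ℕ} :
    Set.InjOn (fun a => (gridRanking ℓ k a, gridValuation ℓ k a)) (PermSet k ℓ) := by
  intro a ha b hb hab
  simp only [Prod.mk.injEq] at hab
  obtain ⟨hR, hV⟩ := hab
  have hlen : a.length = b.length := by rw [permLen ha, permLen hb]
  refine List.ext_getElem hlen ?_
  intro p hp hp'
  set i' := gridI a (p+1) with hi'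
  set j' := gridJ a (p+1) with hj'
  have hi1 : 1 ≤ i' := by rw [hi', gridI_eq_grid]; exact one_le_grid _ a _ hp
  have hj1 : 1 ≤ j' := by rw [hj', gridJ_eq_grid]; exact one_le_grid _ a _ hp
  have hile : i' ≤ ℓ := permGridI_le ha _
  have hjle : j' ≤ k := permGridJ_le ha _
  have hinva : gridInv a i' j' = p + 1 := gridInv_eq (permNodup ha) hp rfl rfl hi1
  -- transfer to b via the ranking matrix
  have hentry : gridRanking ℓ k a ⟨i'-1, by omega⟩ ⟨j'-1, by omega⟩ = p + 1 := by
    show gridInv a (i'-1+1) (j'-1+1) = p + 1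
    rw [show i'-1+1 = i' by omega, show j'-1+1 = j' by omega, hinva]
  obtain ⟨q, hq, heb, hIb, hJb⟩ := rank_entry hb (⟨i'-1, by omega⟩ : Fin ℓ) (⟨j'-1, by omega⟩ : Fin k)
  rw [← hR] at heb
  rw [hentry] at heb
  rw [show q = p from by omega] at hq hIb hJb
  simp only [show i'-1+1 = i' by omega, show j'-1+1 = j' by omega] at hIb hJb
  -- now compare the valuation entries
  have hI0 : ℓ - i' < ℓ := by omega
  have hJ0 : j' - 1 < k := by omega
  have hVa : gridValuation ℓ k a ⟨ℓ - i', hI0⟩ ⟨j'-1, hJ0⟩ = a[p] := by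
    show a.getD (gridInv a (ℓ - (ℓ - i')) (j'-1+1) - 1) 0 = a[p]
    rw [show ℓ - (ℓ - i') = i' by omega, show j'-1+1 = j' by omega, hinva,
      Nat.add_sub_cancel, List.getD_eq_getElem a 0 hp]
  have hinvb : gridInv b i' j' = p + 1 := gridInv_eq (permNodup hb) hq hIb hJb hi1
  have hVb : gridValuation ℓ k b ⟨ℓ - i', hI0⟩ ⟨j'-1, hJ0⟩ = b[p] := by
    show b.getD (gridInv b (ℓ - (ℓ - i')) (j'-1+1) - 1) 0 = b[p]
    rw [show ℓ - (ℓ - i') = i' by omega, show j'-1+1 = j' by omega, hinvb,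
      Nat.add_sub_cancel, List.getD_eq_getElem b 0 hq]
  have hfin := congrFun (congrFun hV (⟨ℓ - i', hI0⟩ : Fin ℓ)) (⟨j'-1, hJ0⟩ : Fin k)
  exact (hVa.symm.trans hfin).trans hVb

theorem grid_ge_of_chain {r : ℕ → ℕ → Prop} {a : List ℕ} {m : ℕ}
    (g : Fin (m+1) → ℕ) (v : Fin (m+1) → ℕ)
    (hmono : StrictMono g) (hv : ∀ c, a[g c]? = some (v c))
    (hsort : ∀ c c' : Fin (m+1), c < c' → r (v c) (v c')) :
    m + 1 ≤ grid r a (g (Fin.last m) + 1) := by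
  have hbd : ∀ c : Fin (m+1), g c < a.length := by
    intro c
    have := hv c
    by_contra h
    rw [List.getElem?_eq_none (by omega)] at this
    simp at this
  have hgv : ∀ c : Fin (m+1), a[g c]'(hbd c) = v c := by
    intro c
    have := hv c
    rw [List.getElem?_eq_getElem (hbd c)] at this
    exact Option.some.inj this
  set T := g (Fin.last m) + 1 with hT
  have hTlen : (a.take T).length = T := by
    rw [List.length_take]
    have := hbd (Fin.last m)
    omega
  have hgT : ∀ c : Fin (m+1), g c < (a.take T).length := by
    intro c
    rw [hTlen, hT]
    have : g c ≤ g (Fin.last m) := hmono.monotone (Fin.le_last c)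
    omega
  have hsub : (List.ofFn v).Sublist (a.take T) := by
    have hpw : (List.ofFn (fun c : Fin (m+1) => (⟨g c, hgT c⟩ : Fin (a.take T).length))).Pairwise (· < ·) := by
      rw [List.pairwise_ofFn]
      intro c c' hcc
      exact hmono hcc
    have := List.map_getElem_sublist (l := a.take T) hpw
    rw [List.map_ofFn] at this
    convert this using 1
    congr 1
    funext c
    show v c = (a.take T)[g c]'(hgT c)
    rw [List.getElem_take]
    exact (hgv c).symm
  have hmem : m + 1 ∈ gset r a T := by
    refine ⟨List.ofFn v, hsub, by simp, ?_, ?_⟩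
    · rw [List.getLast?_eq_getElem?, List.length_ofFn]
      have h1 : a[T-1]? = some (v (Fin.last m)) := by
        rw [hT, Nat.add_sub_cancel]
        exact hv (Fin.last m)
      rw [h1, show m + 1 - 1 = m from rfl, List.getElem?_eq_getElem (by simp)]
      congr 1
      rw [List.getElem_ofFn]
      congr 1
    · rw [List.pairwise_ofFn]
      intro c c' hcc
      exact hsort c c' hcc
  exact le_csSup (gset_bddAbove r a T) hmem

section Surj

variable {ℓ k : ℕ}

/-- choice of a cell of `P` with value `p+1`. -/
noncomputable def pcell (P : Matrix (Fin ℓ) (Fin k) ℕ) (hℓ : 0 < ℓ) (hk : 0 < k)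
    (p : ℕ) : Fin ℓ × Fin k :=
  if h : ∃ cc : Fin ℓ × Fin k, P cc.1 cc.2 = p+1 then h.choose else (⟨0, hℓ⟩, ⟨0, hk⟩)

/-- the permutation list constructed from the pair `(P, Q)`. -/
noncomputable def ylist (P Q : Matrix (Fin ℓ) (Fin k) ℕ) (hℓ : 0 < ℓ) (hk : 0 < k) :
    List ℕ :=
  (List.range (k*ℓ)).map (fun p =>
    Q ⟨ℓ - 1 - (pcell P hℓ hk p).1.1, by omega⟩ (pcell P hℓ hk p).2)

variable {P Q : Matrix (Fin ℓ) (Fin k) ℕ} (hP : P ∈ YSet ℓ k) (hQ : Q ∈ YSet ℓ k)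
  (hℓ : 0 < ℓ) (hk : 0 < k)

set_option linter.unusedVariables false

include hP in
theorem P_mem (i : Fin ℓ) (j : Fin k) : 1 ≤ P i j ∧ P i j ≤ k * ℓ := by
  have := hP.1.mapsTo (Set.mem_univ (i, j))
  simpa using this

include hP in
theorem P_inj {c c' : Fin ℓ × Fin k} (h : P c.1 c.2 = P c'.1 c'.2) : c = c' :=
  hP.1.injOn (Set.mem_univ _) (Set.mem_univ _) h

include hP in
theorem pcell_spec {p : ℕ} (hp : p < k * ℓ) :
    P (pcell P hℓ hk p).1 (pcell P hℓ hk p).2 = p + 1 := by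
  have hex : ∃ cc : Fin ℓ × Fin k, P cc.1 cc.2 = p+1 := by
    have := hP.1.surjOn (by simp [Finset.mem_Icc]; omega : (p+1 : ℕ) ∈ (↑(Finset.Icc 1 (k*ℓ)) : Set ℕ))
    obtain ⟨c, -, hc⟩ := this
    exact ⟨c, hc⟩
  rw [pcell, dif_pos hex]
  exact hex.choose_spec

include hP in
theorem pcell_P (i : Fin ℓ) (j : Fin k) : pcell P hℓ hk (P i j - 1) = (i, j) := by
  have h1 := (P_mem hP i j).1
  have h2 := (P_mem hP i j).2
  have hp : P i j - 1 < k * ℓ := by omega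
  have := pcell_spec hP hℓ hk hp
  rw [show P i j - 1 + 1 = P i j from by omega] at this
  exact P_inj hP this

theorem ylist_length : (ylist P Q hℓ hk).length = k * ℓ := by simp [ylist]

theorem ylist_get {p : ℕ} (hp : p < k * ℓ) :
    (ylist P Q hℓ hk)[p]'(by rw [ylist_length]; exact hp) =
      Q ⟨ℓ - 1 - (pcell P hℓ hk p).1.1, by omega⟩ (pcell P hℓ hk p).2 := by
  simp [ylist]

include hP in
theorem ylist_getP (i : Fin ℓ) (j : Fin k) :
    (ylist P Q hℓ hk)[P i j - 1]'(by rw [ylist_length]; have h1 := (P_mem hP i j).1; have h2 := (P_mem hP i j).2; omega) =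
      Q ⟨ℓ - 1 - i.1, by omega⟩ j := by
  have h1 := (P_mem hP i j).1
  have h2 := (P_mem hP i j).2
  rw [ylist_get hℓ hk (by omega)]
  have hc := pcell_P hP hℓ hk i j
  simp only [hc]

include hP hQ in
theorem ylist_nodup : (ylist P Q hℓ hk).Nodup := by
  rw [List.nodup_iff_injective_getElem]
  intro ⟨p, hp⟩ ⟨q, hq⟩ h
  simp only at h
  rw [ylist_length] at hp hq
  have hvp := ylist_get (P := P) (Q := Q) hℓ hk hp
  have hvq := ylist_get (P := P) (Q := Q) hℓ hk hq
  rw [hvp, hvq] at h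
  have := hQ.1.injOn (Set.mem_univ (_, _)) (Set.mem_univ (_, _)) h
  rw [Prod.mk.injEq] at this
  obtain ⟨h1, h2⟩ := this
  have hi1 : (pcell P hℓ hk p).1.1 < ℓ := (pcell P hℓ hk p).1.2
  have hi2 : (pcell P hℓ hk q).1.1 < ℓ := (pcell P hℓ hk q).1.2
  have h1' : (pcell P hℓ hk p).1 = (pcell P hℓ hk q).1 := by
    apply Fin.ext
    have hh : ℓ - 1 - (pcell P hℓ hk p).1.1 = ℓ - 1 - (pcell P hℓ hk q).1.1 :=
      congrArg Fin.val h1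
    omega
  have hcc : pcell P hℓ hk p = pcell P hℓ hk q := Prod.ext h1' h2
  have e1 := pcell_spec hP hℓ hk hp
  have e2 := pcell_spec hP hℓ hk hq
  rw [hcc] at e1
  rw [e2] at e1
  simpa using e1.symm

include hP hQ in
theorem ylist_mem {x : ℕ} : x ∈ ylist P Q hℓ hk ↔ 1 ≤ x ∧ x ≤ k * ℓ := by
  constructor
  · intro hx
    rw [ylist, List.mem_map] at hx
    obtain ⟨p, -, rfl⟩ := hx
    have := hQ.1.mapsTo (Set.mem_univ (⟨ℓ - 1 - (pcell P hℓ hk p).1.1, by omega⟩, (pcell P hℓ hk p).2))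
    simpa using this
  · intro hx
    have := hQ.1.surjOn (by simp [Finset.mem_Icc]; omega : x ∈ (↑(Finset.Icc 1 (k*ℓ)) : Set ℕ))
    obtain ⟨⟨d1, d2⟩, -, hd⟩ := this
    simp only at hd
    have hd1 : d1.1 < ℓ := d1.2
    set i : Fin ℓ := ⟨ℓ - 1 - d1.1, by omega⟩ with hi
    have h2 := (P_mem hP i d2).2
    have h1 := (P_mem hP i d2).1
    have hget := ylist_getP (Q := Q) hP hℓ hk i d2
    have : Q ⟨ℓ - 1 - i.1, by omega⟩ d2 = x := by
      rw [← hd]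
      congr 1
      apply Fin.ext
      show ℓ - 1 - i.1 = d1.1
      rw [hi]
      simp only
      omega
    rw [this] at hget
    rw [← hget]
    exact List.getElem_mem _

include hP hQ in
theorem ylist_perm : (ylist P Q hℓ hk).Perm (List.range' 1 (k*ℓ)) := by
  rw [List.perm_ext_iff_of_nodup (ylist_nodup hP hQ hℓ hk) List.nodup_range']
  intro x
  rw [ylist_mem hP hQ hℓ hk, List.mem_range'_1]
  omega

end Surj

section Surj2

variable {ℓ k : ℕ} {P Q : Matrix (Fin ℓ) (Fin k) ℕ} (hP : P ∈ YSet ℓ k)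
  (hQ : Q ∈ YSet ℓ k) (hℓ : 0 < ℓ) (hk : 0 < k)

include hP hQ hℓ hk

theorem keyJ {p q : ℕ} (hp : p < k*ℓ) (hq : q < k*ℓ) (hpq : p < q)
    (hval : Q ⟨ℓ-1-(pcell P hℓ hk p).1.1, by omega⟩ (pcell P hℓ hk p).2 <
            Q ⟨ℓ-1-(pcell P hℓ hk q).1.1, by omega⟩ (pcell P hℓ hk q).2) :
    (pcell P hℓ hk p).2.1 < (pcell P hℓ hk q).2.1 := by
  set cp := pcell P hℓ hk p with hcp
  set cq := pcell P hℓ hk q with hcq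
  have ep := pcell_spec hP hℓ hk hp
  have eq' := pcell_spec hP hℓ hk hq
  rw [← hcp] at ep
  rw [← hcq] at eq'
  by_contra hle
  push_neg at hle
  have hle' : cq.2 ≤ cp.2 := hle
  have h1 : P cp.1 cq.2 ≤ P cp.1 cp.2 := (hP.2.1 cp.1).monotone hle'
  have h2 : P cp.1 cq.2 < P cq.1 cq.2 := by omega
  have h3 : cp.1 < cq.1 := (hP.2.2 cq.2).lt_iff_lt.mp h2
  have h3' : cp.1.1 < cq.1.1 := h3
  have hc2 : cq.1.1 < ℓ := cq.1.2
  have hi : (⟨ℓ-1-cq.1.1, by omega⟩ : Fin ℓ) < (⟨ℓ-1-cp.1.1, by omega⟩ : Fin ℓ) := by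
    show ℓ-1-cq.1.1 < ℓ-1-cp.1.1
    omega
  have hq1 : Q ⟨ℓ-1-cp.1.1, by omega⟩ cq.2 ≤ Q ⟨ℓ-1-cp.1.1, by omega⟩ cp.2 :=
    (hQ.2.1 _).monotone hle'
  have hq2 : Q ⟨ℓ-1-cq.1.1, by omega⟩ cq.2 < Q ⟨ℓ-1-cp.1.1, by omega⟩ cq.2 :=
    (hQ.2.2 cq.2) hi
  change Q ⟨ℓ-1-cp.1.1, by omega⟩ cp.2 < Q ⟨ℓ-1-cq.1.1, by omega⟩ cq.2 at hval
  omega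

theorem keyI {p q : ℕ} (hp : p < k*ℓ) (hq : q < k*ℓ) (hpq : p < q)
    (hval : Q ⟨ℓ-1-(pcell P hℓ hk q).1.1, by omega⟩ (pcell P hℓ hk q).2 <
            Q ⟨ℓ-1-(pcell P hℓ hk p).1.1, by omega⟩ (pcell P hℓ hk p).2) :
    (pcell P hℓ hk p).1.1 < (pcell P hℓ hk q).1.1 := by
  set cp := pcell P hℓ hk p with hcp
  set cq := pcell P hℓ hk q with hcq
  have ep := pcell_spec hP hℓ hk hp
  have eq' := pcell_spec hP hℓ hk hq
  rw [← hcp] at ep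
  rw [← hcq] at eq'
  by_contra hle
  push_neg at hle
  have hle' : cq.1 ≤ cp.1 := hle
  have hj : cp.2 < cq.2 := by
    by_contra hje
    push_neg at hje
    have g1 : P cq.1 cq.2 ≤ P cp.1 cq.2 := (hP.2.2 cq.2).monotone hle'
    have g2 : P cp.1 cq.2 ≤ P cp.1 cp.2 := (hP.2.1 cp.1).monotone hje
    omega
  have hc2 : cp.1.1 < ℓ := cp.1.2
  have hi : (⟨ℓ-1-cp.1.1, by omega⟩ : Fin ℓ) ≤ (⟨ℓ-1-cq.1.1, by omega⟩ : Fin ℓ) := by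
    show ℓ-1-cp.1.1 ≤ ℓ-1-cq.1.1
    have : cq.1.1 ≤ cp.1.1 := hle
    omega
  have hq1 : Q ⟨ℓ-1-cp.1.1, by omega⟩ cp.2 ≤ Q ⟨ℓ-1-cq.1.1, by omega⟩ cp.2 :=
    ((hQ.2.2 cp.2).monotone) hi
  have hq2 : Q ⟨ℓ-1-cq.1.1, by omega⟩ cp.2 < Q ⟨ℓ-1-cq.1.1, by omega⟩ cq.2 :=
    (hQ.2.1 _) hj
  change Q ⟨ℓ-1-cq.1.1, by omega⟩ cq.2 < Q ⟨ℓ-1-cp.1.1, by omega⟩ cp.2 at hval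
  omega

theorem ylist_gridJ_le : ∀ p, p < k*ℓ → gridJ (ylist P Q hℓ hk) (p+1) ≤ (pcell P hℓ hk p).2.1 + 1 := by
  intro p
  induction p using Nat.strong_induction_on with
  | _ p IH =>
  intro hp
  by_cases h2 : gridJ (ylist P Q hℓ hk) (p+1) ≤ 1
  · omega
  push_neg at h2
  rw [gridJ_eq_grid] at h2 ⊢
  obtain ⟨s, hspq, hrel, hle⟩ := exists_pred (r := (· < ·)) (ylist_nodup hP hQ hℓ hk)
    (by rw [ylist_length]; exact hp) (by omega)
  have hsk : s < k*ℓ := by omega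
  have hIH := IH s hspq hsk
  rw [gridJ_eq_grid] at hIH
  have hrel' : Q ⟨ℓ-1-(pcell P hℓ hk s).1.1, by omega⟩ (pcell P hℓ hk s).2 <
      Q ⟨ℓ-1-(pcell P hℓ hk p).1.1, by omega⟩ (pcell P hℓ hk p).2 := by
    have e1 := ylist_get (P := P) (Q := Q) hℓ hk hsk
    have e2 := ylist_get (P := P) (Q := Q) hℓ hk hp
    rw [← e1, ← e2]
    exact hrel
  have hkey := keyJ hP hQ hℓ hk hsk hp hspq hrel'
  omega

theorem ylist_gridI_le : ∀ p, p < k*ℓ → gridI (ylist P Q hℓ hk) (p+1) ≤ (pcell P hℓ hk p).1.1 + 1 := by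
  intro p
  induction p using Nat.strong_induction_on with
  | _ p IH =>
  intro hp
  by_cases h2 : gridI (ylist P Q hℓ hk) (p+1) ≤ 1
  · omega
  push_neg at h2
  rw [gridI_eq_grid] at h2 ⊢
  obtain ⟨s, hspq, hrel, hle⟩ := exists_pred (r := (· > ·)) (ylist_nodup hP hQ hℓ hk)
    (by rw [ylist_length]; exact hp) (by omega)
  have hsk : s < k*ℓ := by omega
  have hIH := IH s hspq hsk
  rw [gridI_eq_grid] at hIH
  have hrel' : Q ⟨ℓ-1-(pcell P hℓ hk p).1.1, by omega⟩ (pcell P hℓ hk p).2 <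
      Q ⟨ℓ-1-(pcell P hℓ hk s).1.1, by omega⟩ (pcell P hℓ hk s).2 := by
    have e1 := ylist_get (P := P) (Q := Q) hℓ hk hsk
    have e2 := ylist_get (P := P) (Q := Q) hℓ hk hp
    rw [← e1, ← e2]
    exact hrel
  have hkey := keyI hP hQ hℓ hk hsk hp hspq hrel'
  omega

end Surj2

section Surj3

variable {ℓ k : ℕ} {P Q : Matrix (Fin ℓ) (Fin k) ℕ} (hP : P ∈ YSet ℓ k)
  (hQ : Q ∈ YSet ℓ k) (hℓ : 0 < ℓ) (hk : 0 < k)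

include hP hQ hℓ hk

theorem ylist_gridJ (i : Fin ℓ) (j : Fin k) :
    gridJ (ylist P Q hℓ hk) (P i j) = j.1 + 1 := by
  have h1 := (P_mem hP i j).1
  have h2 := (P_mem hP i j).2
  have hge : j.1 + 1 ≤ gridJ (ylist P Q hℓ hk) (P i j) := by
    rw [gridJ_eq_grid]
    have hchain := grid_ge_of_chain (r := (· < ·)) (a := ylist P Q hℓ hk) (m := j.1)
      (g := fun c => P i ⟨c.1, by omega⟩ - 1)
      (v := fun c => Q ⟨ℓ-1-i.1, by omega⟩ ⟨c.1, by omega⟩)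
      (by
        intro c c' hcc
        dsimp only
        have hc1 := (P_mem hP i ⟨c.1, by omega⟩).1
        have hmono : P i ⟨c.1, by omega⟩ < P i ⟨c'.1, by omega⟩ := (hP.2.1 i) (by exact hcc)
        omega)
      (by
        intro c
        have hc1 := (P_mem hP i ⟨c.1, by omega⟩).1
        have hc2 := (P_mem hP i ⟨c.1, by omega⟩).2
        have hlt : P i ⟨c.1, by omega⟩ - 1 < (ylist P Q hℓ hk).length := by
          rw [ylist_length]; omega
        rw [List.getElem?_eq_getElem hlt]
        congr 1
        exact ylist_getP hP hℓ hk i ⟨c.1, by omega⟩)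
      (by
        intro c c' hcc
        exact (hQ.2.1 _) (by exact hcc))
    have hlast : P i ⟨(Fin.last j.1).1, by omega⟩ - 1 + 1 = P i j := by
      have : (⟨(Fin.last j.1).1, by omega⟩ : Fin k) = j := by
        apply Fin.ext; simp
      rw [this]; omega
    rw [hlast] at hchain
    exact hchain
  have hle := ylist_gridJ_le hP hQ hℓ hk (P i j - 1) (by omega)
  rw [show P i j - 1 + 1 = P i j from by omega, pcell_P hP hℓ hk i j] at hle
  dsimp only at hle
  omega

theorem ylist_gridI (i : Fin ℓ) (j : Fin k) :
    gridI (ylist P Q hℓ hk) (P i j) = i.1 + 1 := by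
  have h1 := (P_mem hP i j).1
  have h2 := (P_mem hP i j).2
  have hge : i.1 + 1 ≤ gridI (ylist P Q hℓ hk) (P i j) := by
    rw [gridI_eq_grid]
    have hchain := grid_ge_of_chain (r := (· > ·)) (a := ylist P Q hℓ hk) (m := i.1)
      (g := fun c => P ⟨c.1, by omega⟩ j - 1)
      (v := fun c => Q ⟨ℓ-1-c.1, by omega⟩ j)
      (by
        intro c c' hcc
        dsimp only
        have hc1 := (P_mem hP ⟨c.1, by omega⟩ j).1
        have hmono : P ⟨c.1, by omega⟩ j < P ⟨c'.1, by omega⟩ j := (hP.2.2 j) (by exact hcc)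
        omega)
      (by
        intro c
        have hc1 := (P_mem hP ⟨c.1, by omega⟩ j).1
        have hc2 := (P_mem hP ⟨c.1, by omega⟩ j).2
        have hlt : P ⟨c.1, by omega⟩ j - 1 < (ylist P Q hℓ hk).length := by
          rw [ylist_length]; omega
        rw [List.getElem?_eq_getElem hlt]
        congr 1
        exact ylist_getP hP hℓ hk (⟨c.1, by omega⟩ : Fin ℓ) j)
      (by
        intro c c' hcc
        have hcc' : c.1 < c'.1 := hcc
        have hc'i : c'.1 ≤ i.1 := by omega
        have hi2 := i.2
        exact (hQ.2.2 j) (by show ℓ-1-c'.1 < ℓ-1-c.1; omega))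
    have hlast : P ⟨(Fin.last i.1).1, by omega⟩ j - 1 + 1 = P i j := by
      have : (⟨(Fin.last i.1).1, by omega⟩ : Fin ℓ) = i := by
        apply Fin.ext; simp
      rw [this]; omega
    rw [hlast] at hchain
    exact hchain
  have hle := ylist_gridI_le hP hQ hℓ hk (P i j - 1) (by omega)
  rw [show P i j - 1 + 1 = P i j from by omega, pcell_P hP hℓ hk i j] at hle
  dsimp only at hle
  omega

theorem ylist_permSet : ylist P Q hℓ hk ∈ PermSet k ℓ := by
  refine ⟨ylist_perm hP hQ hℓ hk, ?_, ?_⟩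
  · rintro ⟨s, hsub, hslen, hsort⟩
    obtain ⟨p, hp, hge⟩ := exists_grid_ge_of_sorted_sublist (r := (· < ·))
      (ylist_nodup hP hQ hℓ hk) hsub (by intro h; rw [h] at hslen; simp at hslen) hsort
    rw [hslen] at hge
    have hp' : p < k*ℓ := by rw [ylist_length] at hp; exact hp
    have hle := ylist_gridJ_le hP hQ hℓ hk p hp'
    rw [gridJ_eq_grid] at hle
    have := (pcell P hℓ hk p).2.2
    omega
  · rintro ⟨s, hsub, hslen, hsort⟩
    obtain ⟨p, hp, hge⟩ := exists_grid_ge_of_sorted_sublist (r := (· > ·))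
      (ylist_nodup hP hQ hℓ hk) hsub (by intro h; rw [h] at hslen; simp at hslen) hsort
    rw [hslen] at hge
    have hp' : p < k*ℓ := by rw [ylist_length] at hp; exact hp
    have hle := ylist_gridI_le hP hQ hℓ hk p hp'
    rw [gridI_eq_grid] at hle
    have := (pcell P hℓ hk p).1.2
    omega

theorem ylist_gridInv (i : Fin ℓ) (j : Fin k) :
    gridInv (ylist P Q hℓ hk) (i.1+1) (j.1+1) = P i j := by
  have h1 := (P_mem hP i j).1
  have h2 := (P_mem hP i j).2
  have hp : P i j - 1 < (ylist P Q hℓ hk).length := by rw [ylist_length]; omega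
  have hI := ylist_gridI hP hQ hℓ hk i j
  have hJ := ylist_gridJ hP hQ hℓ hk i j
  rw [show P i j = P i j - 1 + 1 from by omega] at hI hJ
  rw [gridInv_eq (ylist_nodup hP hQ hℓ hk) hp hI hJ (by omega)]
  omega

theorem ylist_rank : gridRanking ℓ k (ylist P Q hℓ hk) = P := by
  funext i j
  exact ylist_gridInv hP hQ hℓ hk i j

theorem ylist_val : gridValuation ℓ k (ylist P Q hℓ hk) = Q := by
  funext i0 j0
  have hi0 := i0.2
  set i : Fin ℓ := ⟨ℓ - 1 - i0.1, by omega⟩ with hi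
  have hrow : i.1 + 1 = ℓ - i0.1 := by rw [hi]; simp; omega
  have hinv := ylist_gridInv hP hQ hℓ hk i j0
  rw [hrow] at hinv
  show (ylist P Q hℓ hk).getD (gridInv (ylist P Q hℓ hk) (ℓ - i0.1) (j0.1+1) - 1) 0 = Q i0 j0
  rw [hinv]
  have h1 := (P_mem hP i j0).1
  have h2 := (P_mem hP i j0).2
  have hp : P i j0 - 1 < (ylist P Q hℓ hk).length := by rw [ylist_length]; omega
  rw [List.getD_eq_getElem _ 0 hp]
  have := ylist_getP (Q := Q) hP hℓ hk i j0
  rw [this]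
  congr 1
  apply Fin.ext
  show ℓ - 1 - i.1 = i0.1
  rw [hi]
  simp
  omega

end Surj3

theorem phi_bijection (k ℓ : ℕ) :
    Set.BijOn (fun a => (gridRanking ℓ k a, gridValuation ℓ k a))
      (PermSet k ℓ) (YSet ℓ k ×ˢ YSet ℓ k) := by
  refine ⟨?_, phi_injOn, ?_⟩
  · intro a ha
    exact Set.mem_prod.mpr ⟨rank_mem_YSet ha, val_mem_YSet ha⟩
  · rintro ⟨Pm, Qm⟩ hmem
    rw [Set.mem_prod] at hmem
    obtain ⟨hPm, hQm⟩ := hmem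
    by_cases h0 : k * ℓ = 0
    · refine ⟨[], ⟨?_, ?_, ?_⟩, ?_⟩
      · rw [h0]; rfl
      · rintro ⟨s, hsub, hslen, -⟩
        rw [List.sublist_nil.mp hsub] at hslen
        simp at hslen
      · rintro ⟨s, hsub, hslen, -⟩
        rw [List.sublist_nil.mp hsub] at hslen
        simp at hslen
      · have : ∀ M N : Matrix (Fin ℓ) (Fin k) ℕ, M = N := by
          intro M N
          funext i j
          rcases Nat.mul_eq_zero.mp h0 with h | h
          · exact absurd j.2 (by omega)
          · exact absurd i.2 (by omega)
        show (gridRanking ℓ k [], gridValuation ℓ k []) = (Pm, Qm)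
        rw [Prod.mk.injEq]
        exact ⟨this _ _, this _ _⟩
    · have hℓ : 0 < ℓ := by
        rcases Nat.eq_zero_or_pos ℓ with h | h
        · exfalso; apply h0; rw [h, Nat.mul_zero]
        · exact h
      have hk : 0 < k := by
        rcases Nat.eq_zero_or_pos k with h | h
        · exfalso; apply h0; rw [h, Nat.zero_mul]
        · exact h
      refine ⟨ylist Pm Qm hℓ hk, ylist_permSet hPm hQm hℓ hk, ?_⟩
      show (gridRanking ℓ k _, gridValuation ℓ k _) = (Pm, Qm)
      rw [Prod.mk.injEq]
      exact ⟨ylist_rank hPm hQm hℓ hk, ylist_val hPm hQm hℓ hk⟩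
end

section
/- For min(k,ℓ) ≤ 2 and k,ℓ ≥ 1, there is exactly one cyclic permutation of {1,...,(k-1)(ℓ-1)+1} with no increasing cyclic sub-permutation of length k+1 and no decreasing cyclic sub-permutation of length ℓ+1; it is the decreasing cyclic permutation when k ≤ 2 and the increasing cyclic permutation when k ≥ 3. -/
/-- The cyclic permutation represented by list `c` has an increasing cyclic
sub-permutation of length `m`: some rotation of `c` has a strictly increasing
sublist of length `m`. -/
def IncCycSub (c : List ℕ) (m : ℕ) : Prop :=
  ∃ (r : ℕ) (s : List ℕ), s.Sublist (c.rotate r) ∧ s.length = m ∧ s.Pairwise (· < ·)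

/-- Decreasing cyclic sub-permutation of length `m`. -/
def DecCycSub (c : List ℕ) (m : ℕ) : Prop :=
  ∃ (r : ℕ) (s : List ℕ), s.Sublist (c.rotate r) ∧ s.length = m ∧ s.Pairwise (· > ·)

private lemma cyc_rot_inv (R : ℕ → ℕ → Prop) {c c' : List ℕ} (h : c.IsRotated c') {m : ℕ}
    (H : ∃ r s, List.Sublist s (c.rotate r) ∧ s.length = m ∧ s.Pairwise R) :
    ∃ r s, List.Sublist s (c'.rotate r) ∧ s.length = m ∧ s.Pairwise R := by
  obtain ⟨r, s, hs, hl, hsort⟩ := H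
  obtain ⟨r', hr'⟩ := h.symm.trans (⟨r, rfl⟩ : c.IsRotated (c.rotate r))
  exact ⟨r', s, hr' ▸ hs, hl, hsort⟩

private lemma incCycSub_rot {c c' : List ℕ} (h : c.IsRotated c') (m : ℕ) :
    IncCycSub c m ↔ IncCycSub c' m :=
  ⟨cyc_rot_inv _ h, cyc_rot_inv _ h.symm⟩

private lemma decCycSub_rot {c c' : List ℕ} (h : c.IsRotated c') (m : ℕ) :
    DecCycSub c m ↔ DecCycSub c' m :=
  ⟨cyc_rot_inv _ h, cyc_rot_inv _ h.symm⟩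

private lemma dec_iff_inc_rev (c : List ℕ) (m : ℕ) : DecCycSub c m ↔ IncCycSub c.reverse m := by
  constructor
  · rintro ⟨r, s, hs, hl, hsort⟩
    have h0 : c.IsRotated (c.rotate r) := ⟨r, rfl⟩
    have hrot : (c.rotate r).reverse.IsRotated c.reverse := h0.reverse.symm
    refine cyc_rot_inv _ hrot ⟨0, s.reverse, ?_, by simp [hl], ?_⟩
    · simpa using hs.reverse
    · exact List.pairwise_reverse.mpr hsort
  · rintro ⟨r, s, hs, hl, hsort⟩
    have h0 : c.reverse.IsRotated (c.reverse.rotate r) := ⟨r, rfl⟩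
    have hrot : (c.reverse.rotate r).reverse.IsRotated c := by
      simpa using h0.reverse.symm
    refine cyc_rot_inv _ hrot ⟨0, s.reverse, ?_, by simp [hl], ?_⟩
    · simpa using hs.reverse
    · exact List.pairwise_reverse.mpr hsort

private lemma not_cycSub_of_lt (R : ℕ → ℕ → Prop) {c : List ℕ} {m : ℕ} (h : c.length < m) :
    ¬ ∃ r s, List.Sublist s (c.rotate r) ∧ s.length = m ∧ s.Pairwise R := by
  rintro ⟨r, s, hs, hl, -⟩
  have := hs.length_le
  rw [List.length_rotate, hl] at this
  omega

private lemma two_le_mono_contra {s : List ℕ} (h1 : s.Pairwise (· < ·)) (h2 : s.Pairwise (· > ·))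
    (h : 2 ≤ s.length) : False := by
  match s, h with
  | a :: b :: t, _ =>
    have h1' := (List.pairwise_cons.mp h1).1 b (by simp)
    have h2' := (List.pairwise_cons.mp h2).1 b (by simp)
    omega

private lemma no_inc_three_iff (n : ℕ) (c : List ℕ) (hc : c.Perm (List.range' 1 n)) :
    ¬ IncCycSub c 3 ↔ c.IsRotated (List.range' 1 n).reverse := by
  have hrevsorted : (List.range' 1 n).reverse.Pairwise (· > ·) :=
    List.pairwise_reverse.mpr (List.pairwise_lt_range' (s := 1) (n := n))
  haveI : IsAntisymm ℕ (· > ·) := ⟨fun a b h1 h2 => absurd h1 (lt_asymm h2)⟩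
  constructor
  · intro hno
    rcases Nat.eq_zero_or_pos n with hn | hn
    · subst hn
      simp only [List.range'] at hc ⊢
      simp [List.perm_nil.mp hc]
    -- find position of n in c
    have hmem : n ∈ c := hc.mem_iff.mpr (List.mem_range'_1.mpr ⟨hn, by omega⟩)
    obtain ⟨p, hp, hcp⟩ := List.getElem_of_mem hmem
    set c₁ := c.rotate p with hc₁def
    have hrot : c.IsRotated c₁ := ⟨p, rfl⟩
    have hc₁perm : c₁.Perm (List.range' 1 n) := (List.rotate_perm c p).trans hc
    have hno₁ : ¬ IncCycSub c₁ 3 := fun H => hno ((incCycSub_rot hrot 3).mpr H)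
    have hnodup : c₁.Nodup := hc₁perm.nodup_iff.mpr (List.nodup_range' (s := 1) (n := n))
    have hplen : p ≤ c.length := le_of_lt hp
    have hc₁eq : c₁ = n :: (c.drop (p+1) ++ c.take p) := by
      rw [hc₁def, List.rotate_eq_drop_append_take hplen, List.drop_eq_getElem_cons hp, hcp]
      rfl
    set t : List ℕ := c.drop (p+1) ++ c.take p with htdef
    -- all elements of t are < n
    have htlt : ∀ x ∈ t, x < n := by
      intro x hx
      have hxc : x ∈ c₁ := by rw [hc₁eq]; exact List.mem_cons_of_mem _ hx
      have hxr := List.mem_range'_1.mp (hc₁perm.mem_iff.mp hxc)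
      have hxne : x ≠ n := by
        intro hxn
        have : n ∉ t := by
          have := hnodup
          rw [hc₁eq] at this
          exact (List.nodup_cons.mp this).1
        exact this (hxn ▸ hx)
      omega
    have htnodup : t.Nodup := by
      have := hnodup; rw [hc₁eq] at this; exact (List.nodup_cons.mp this).2
    -- t is sorted decreasing
    have htsorted : t.Pairwise (· > ·) := by
      by_contra hts
      rw [List.pairwise_iff_getElem] at hts
      push_neg at hts
      obtain ⟨i, j, hi, hj, hij, hnot⟩ := hts
      have hne : t[i] ≠ t[j] := fun he => absurd (htnodup.getElem_inj_iff.mp he) (by omega)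
      have hlt : t[i] < t[j] := by omega
      -- build increasing subsequence [t[i], t[j], n]
      apply hno₁
      refine ⟨i + 1, [t[i], t[j], n], ?_, rfl, ?_⟩
      · have hrw : c₁.rotate (i+1) = t.drop i ++ (n :: t.take i) := by
          rw [hc₁eq, List.rotate_eq_drop_append_take (by simp; omega)]
          simp [List.drop, List.take]
        rw [hrw]
        have hmemj : t[j] ∈ t.drop (i+1) := by
          have hjlt : j - (i+1) < (t.drop (i+1)).length := by simp; omega
          have : (t.drop (i+1))[j - (i+1)] = t[j] := by
            rw [List.getElem_drop]; congr 1; omega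
          exact this ▸ List.getElem_mem hjlt
        have sub1 : [t[i], t[j]].Sublist (t.drop i) := by
          rw [List.drop_eq_getElem_cons hi]
          exact List.Sublist.cons₂ _ (List.singleton_sublist.mpr hmemj)
        have sub2 : [n].Sublist (n :: t.take i) :=
          List.Sublist.cons₂ _ (List.nil_sublist _)
        exact sub1.append sub2
      · have h1 : t[i] < n := htlt _ (List.getElem_mem hi)
        have h2 : t[j] < n := htlt _ (List.getElem_mem hj)
        simp [List.pairwise_cons]
        omega
    have hc₁sorted : c₁.Pairwise (· > ·) := by
      rw [hc₁eq]
      exact List.pairwise_cons.mpr ⟨htlt, htsorted⟩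
    have : c₁ = (List.range' 1 n).reverse :=
      List.Perm.eq_of_pairwise (fun a b _ _ h1 h2 => absurd h1 (lt_asymm h2)) hc₁sorted hrevsorted (hc₁perm.trans (List.reverse_perm _).symm)
    exact this ▸ hrot
  · intro hrot H
    have H' := cyc_rot_inv _ hrot H
    obtain ⟨r, s, hs, hl, hsort⟩ := H'
    have hlen : (List.range' 1 n).reverse.length = n := by simp
    rcases Nat.eq_zero_or_pos n with hn | hn
    · subst hn; simp at hs; simp [hs] at hl
    have hrn : r % n < n := Nat.mod_lt _ hn
    rw [List.rotate_reverse, List.length_range'] at hs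
    set q : ℕ := n - r % n with hq
    have hqn : q ≤ n := Nat.sub_le _ _
    have hsplit : List.range' 1 n = List.range' 1 q ++ List.range' (1+q) (n-q) := by
      have := List.range'_append (s := 1) (m := q) (n := n-q) (step := 1)
      simp only [one_mul] at this
      rw [this]; congr 1; omega
    have hrw : (List.range' 1 n).rotate q =
        List.range' (1+q) (n-q) ++ List.range' 1 q := by
      rw [hsplit, List.rotate_eq_drop_append_take
        (by simp only [List.length_append, List.length_range']; omega)]
      rw [List.drop_left' (by simp), List.take_left' (by simp)]
    rw [hrw] at hs
    rw [List.reverse_append] at hs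
    obtain ⟨s1, s2, hseq, hs1, hs2⟩ := List.sublist_append_iff.mp hs
    have hs1d : s1.Pairwise (· > ·) :=
      (List.pairwise_reverse.mpr (List.pairwise_lt_range' (s := 1) (n := q))).sublist hs1
    have hs2d : s2.Pairwise (· > ·) :=
      (List.pairwise_reverse.mpr (List.pairwise_lt_range' (s := 1+q) (n := n-q))).sublist hs2
    have hs1i : s1.Pairwise (· < ·) := hsort.sublist (hseq ▸ List.sublist_append_left s1 s2)
    have hs2i : s2.Pairwise (· < ·) := hsort.sublist (hseq ▸ List.sublist_append_right s1 s2)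
    have hlensum : s1.length + s2.length = 3 := by
      rw [← List.length_append, ← hseq, hl]
    rcases Nat.lt_or_ge s1.length 2 with h1 | h1
    · exact two_le_mono_contra hs2i hs2d (by omega)
    · exact two_le_mono_contra hs1i hs1d h1

private lemma no_dec_three_iff (n : ℕ) (c : List ℕ) (hc : c.Perm (List.range' 1 n)) :
    ¬ DecCycSub c 3 ↔ c.IsRotated (List.range' 1 n) := by
  rw [dec_iff_inc_rev, no_inc_three_iff n c.reverse ((List.reverse_perm c).trans hc)]
  constructor
  · intro h; simpa using h.reverse
  · intro h; simpa using h.reverse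

theorem extremal_unique_small (k ℓ : ℕ) (hk : 1 ≤ k) (hl : 1 ≤ ℓ)
    (hmin : min k ℓ ≤ 2) (c : List ℕ)
    (hc : c.Perm (List.range' 1 ((k-1)*(ℓ-1)+1))) :
    (¬ IncCycSub c (k+1) ∧ ¬ DecCycSub c (ℓ+1)) ↔
      c.IsRotated (if k ≤ 2 then (List.range' 1 ((k-1)*(ℓ-1)+1)).reverse
                   else List.range' 1 ((k-1)*(ℓ-1)+1)) := by
  have hclen : c.length = (k-1)*(ℓ-1)+1 := by
    rw [hc.length_eq, List.length_range']
  by_cases hk2 : k ≤ 2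
  · rw [if_pos hk2]
    interval_cases k
    · -- k = 1
      have hN : (1-1)*(ℓ-1)+1 = 1 := by omega
      rw [hN] at hc ⊢
      have hc1 : c = [1] := List.perm_singleton.mp (by simpa using hc)
      subst hc1
      constructor
      · intro _
        exact List.IsRotated.refl _
      · intro _
        constructor
        · exact not_cycSub_of_lt _ (by simp)
        · exact not_cycSub_of_lt _ (by simp; omega)
    · -- k = 2
      have hN : (2-1)*(ℓ-1)+1 = ℓ := by omega
      rw [hN] at hc ⊢
      have hdec : ¬ DecCycSub c (ℓ+1) := by
        apply not_cycSub_of_lt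
        rw [hc.length_eq, List.length_range']
        omega
      rw [and_iff_left hdec]
      exact no_inc_three_iff ℓ c hc
  · rw [if_neg hk2]
    have hl2 : ℓ ≤ 2 := by omega
    interval_cases ℓ
    · -- ℓ = 1
      have hN : (k-1)*(1-1)+1 = 1 := by omega
      rw [hN] at hc ⊢
      have hc1 : c = [1] := List.perm_singleton.mp (by simpa using hc)
      subst hc1
      constructor
      · intro _
        exact List.IsRotated.refl _
      · intro _
        constructor
        · exact not_cycSub_of_lt _ (by simp; omega)
        · exact not_cycSub_of_lt _ (by simp)
    · -- ℓ = 2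
      have hN : (k-1)*(2-1)+1 = k := by omega
      rw [hN] at hc ⊢
      have hinc : ¬ IncCycSub c (k+1) := by
        apply not_cycSub_of_lt
        rw [hc.length_eq, List.length_range']
        omega
      rw [and_iff_right hinc]
      exact no_dec_three_iff k c hc
end

section
/- For min(k,ℓ) ≥ 2, the cyclic permutation (1, a_1, ..., a_{(k-1)(ℓ-1)}) of {1,...,(k-1)(ℓ-1)+1} has no increasing cyclic sub-permutation of length k+1 and no decreasing cyclic sub-permutation of length ℓ+1 if and only if the linear sequence [a_1-1, ..., a_{(k-1)(ℓ-1)}-1], viewed as a cyclic permutation of {1,...,(k-1)(ℓ-1)}, lies in S_{k-1,ℓ-1} (as a linear sequence) and, as a cyclic permutation, has no increasing cyclic sub-permutation of length k+1 and no decreasing cyclic sub-permutation of length ℓ+1. -/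
/-! ### Auxiliary lemmas -/

private lemma map_sub_one_range' : ∀ (s n : ℕ), (List.range' (s+1) n).map (· - 1) = List.range' s n
  | _, 0 => rfl
  | s, (n+1) => by
    rw [List.range'_succ, List.range'_succ, List.map_cons, map_sub_one_range' (s+1) n]
    simp

private lemma sorted_map_sub_iff {t : List ℕ} (h2 : ∀ x ∈ t, 2 ≤ x) {R : ℕ → ℕ → Prop}
    (hR : ∀ x y, 2 ≤ x → 2 ≤ y → (R (x-1) (y-1) ↔ R x y)) :
    (t.map (· - 1)).Pairwise R ↔ t.Pairwise R := by
  rw [List.pairwise_map]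
  constructor
  · exact fun h => h.imp_of_mem (fun hx hy h' => (hR _ _ (h2 _ hx) (h2 _ hy)).1 h')
  · exact fun h => h.imp_of_mem (fun hx hy h' => (hR _ _ (h2 _ hx) (h2 _ hy)).2 h')

private lemma exists_sub_map_iff {l : List ℕ} (h2 : ∀ x ∈ l, 2 ≤ x) {R : ℕ → ℕ → Prop}
    (hR : ∀ x y, 2 ≤ x → 2 ≤ y → (R (x-1) (y-1) ↔ R x y)) (m : ℕ) :
    (∃ s : List ℕ, s.Sublist (l.map (· - 1)) ∧ s.length = m ∧ s.Pairwise R) ↔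
      (∃ s : List ℕ, s.Sublist l ∧ s.length = m ∧ s.Pairwise R) := by
  constructor
  · rintro ⟨s, hs, hlen, hsort⟩
    obtain ⟨t, ht, rfl⟩ := List.sublist_map_iff.mp hs
    refine ⟨t, ht, by simpa using hlen, ?_⟩
    exact (sorted_map_sub_iff (fun x hx => h2 x (ht.subset hx)) hR).1 hsort
  · rintro ⟨t, ht, hlen, hsort⟩
    refine ⟨t.map (· - 1), ht.map _, by simpa using hlen, ?_⟩
    exact (sorted_map_sub_iff (fun x hx => h2 x (ht.subset hx)) hR).2 hsort

private lemma cyc_sub_map_iff {l : List ℕ} (h2 : ∀ x ∈ l, 2 ≤ x) {R : ℕ → ℕ → Prop}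
    (hR : ∀ x y, 2 ≤ x → 2 ≤ y → (R (x-1) (y-1) ↔ R x y)) (m : ℕ) :
    (∃ (r : ℕ) (s : List ℕ), s.Sublist ((l.map (· - 1)).rotate r) ∧ s.length = m ∧ s.Pairwise R) ↔
      (∃ (r : ℕ) (s : List ℕ), s.Sublist (l.rotate r) ∧ s.length = m ∧ s.Pairwise R) := by
  have key : ∀ r : ℕ, (∃ s : List ℕ, s.Sublist ((l.map (· - 1)).rotate r) ∧
      s.length = m ∧ s.Pairwise R) ↔
      (∃ s : List ℕ, s.Sublist (l.rotate r) ∧ s.length = m ∧ s.Pairwise R) := by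
    intro r
    rw [← List.map_rotate]
    exact exists_sub_map_iff (fun x hx => h2 x ((List.mem_rotate).1 hx)) hR m
  constructor
  · rintro ⟨r, hr⟩; exact ⟨r, (key r).1 hr⟩
  · rintro ⟨r, hr⟩; exact ⟨r, (key r).2 hr⟩

private lemma rotate_cons_formula (a : List ℕ) (j : ℕ) (hj : j ≤ a.length) :
    (1 :: a).rotate (j+1) = a.drop j ++ 1 :: a.take j := by
  rw [List.rotate_eq_drop_append_take (by simp; omega)]
  simp

/-- The core combinatorial equivalence, phrased about `a` itself. -/
private lemma core (k ℓ : ℕ) (hk : 2 ≤ k) (hl : 2 ≤ ℓ) (a : List ℕ) (hne : a ≠ [])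
    (h2 : ∀ x ∈ a, 2 ≤ x) :
    (¬ IncCycSub (1 :: a) (k+1) ∧ ¬ DecCycSub (1 :: a) (ℓ+1)) ↔
      ((¬ ∃ s : List ℕ, s.Sublist a ∧ s.length = k ∧ s.Pairwise (· < ·)) ∧
       (¬ ∃ s : List ℕ, s.Sublist a ∧ s.length = ℓ ∧ s.Pairwise (· > ·)) ∧
       ¬ IncCycSub a (k+1) ∧ ¬ DecCycSub a (ℓ+1)) := by
  have hpos : 0 < a.length := List.length_pos_iff.2 hne
  -- lifting cyclic subsequences of `a` to cyclic subsequences of `1 :: a`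
  have lift : ∀ (r : ℕ) (s : List ℕ), s.Sublist (a.rotate r) →
      ∃ r' : ℕ, s.Sublist ((1 :: a).rotate r') := by
    intro r s hs
    have hmod : r % a.length < a.length := Nat.mod_lt _ hpos
    rw [← List.rotate_mod, List.rotate_eq_drop_append_take hmod.le] at hs
    refine ⟨r % a.length + 1, ?_⟩
    rw [rotate_cons_formula a _ hmod.le]
    exact hs.trans (List.Sublist.append (List.Sublist.refl _) (List.sublist_cons_self _ _))
  constructor
  · rintro ⟨hinc, hdec⟩
    refine ⟨?_, ?_, ?_, ?_⟩
    · rintro ⟨s, hs, hlen, hsort⟩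
      refine hinc ⟨0, 1 :: s, ?_, by simp [hlen], ?_⟩
      · rw [List.rotate_zero]; exact hs.cons₂ 1
      · refine List.pairwise_cons.2 ⟨fun y hy => ?_, hsort⟩
        have := h2 y (hs.subset hy); omega
    · rintro ⟨s, hs, hlen, hsort⟩
      refine hdec ⟨1, s ++ [1], ?_, by simp [hlen], ?_⟩
      · rw [show (1:ℕ) = 0 + 1 from rfl, List.rotate_cons_succ, List.rotate_zero]
        exact hs.append (List.Sublist.refl _)
      · rw [List.pairwise_append]
        refine ⟨hsort, by simp, fun x hx y hy => ?_⟩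
        simp only [List.mem_singleton] at hy
        subst hy
        have := h2 x (hs.subset hx); omega
    · rintro ⟨r, s, hs, hlen, hsort⟩
      obtain ⟨r', hs'⟩ := lift r s hs
      exact hinc ⟨r', s, hs', hlen, hsort⟩
    · rintro ⟨r, s, hs, hlen, hsort⟩
      obtain ⟨r', hs'⟩ := lift r s hs
      exact hdec ⟨r', s, hs', hlen, hsort⟩
  · rintro ⟨hk1, hl1, hcyck, hcycl⟩
    constructor
    · rintro ⟨r, s, hs, hlen, hsort⟩
      rw [← List.rotate_mod] at hs
      have hmod : r % (1 :: a).length < (1 :: a).length := Nat.mod_lt _ (by simp)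
      rcases hr : r % (1 :: a).length with _ | j
      · rw [hr, List.rotate_zero] at hs
        cases hs with
        | cons _ h =>
          refine hk1 ⟨s.take k, (List.take_sublist _ _).trans h, ?_, ?_⟩
          · rw [List.length_take, hlen]; omega
          · exact List.Pairwise.sublist (List.take_sublist _ _) hsort
        | cons_cons _ h =>
          refine hk1 ⟨_, h, by simpa using hlen, (List.pairwise_cons.1 hsort).2⟩
      · rw [hr] at hs hmod
        simp only [List.length_cons, Nat.succ_lt_succ_iff] at hmod
        rw [rotate_cons_formula a j hmod.le] at hs
        obtain ⟨s₁, s₂, rfl, h₁, h₂⟩ := List.sublist_append_iff.mp hs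
        cases h₂ with
        | cons _ h =>
          refine hcyck ⟨j, s₁ ++ s₂, ?_, hlen, hsort⟩
          rw [List.rotate_eq_drop_append_take hmod.le]
          exact h₁.append h
        | cons_cons _ h =>
          -- s₂ = 1 :: s₃ ; since the list is increasing, s₁ = []
          rename_i s₃
          have hs₁ : s₁ = [] := by
            cases hx : s₁ with
            | nil => rfl
            | cons x t =>
              exfalso
              have hmem : x ∈ s₁ := by rw [hx]; exact List.mem_cons_self
              have hxa : x ∈ a := (h₁.trans (List.drop_sublist _ _)).subset hmem
              have hx2 := h2 x hxa
              have := (List.pairwise_append.1 hsort).2.2 x hmem 1 (List.mem_cons_self)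
              omega
          subst hs₁
          simp only [List.nil_append] at hsort hlen ⊢
          refine hk1 ⟨s₃, h.trans (List.take_sublist _ _), by simpa using hlen,
            (List.pairwise_cons.1 hsort).2⟩
    · rintro ⟨r, s, hs, hlen, hsort⟩
      rw [← List.rotate_mod] at hs
      have hmod : r % (1 :: a).length < (1 :: a).length := Nat.mod_lt _ (by simp)
      rcases hr : r % (1 :: a).length with _ | j
      · rw [hr, List.rotate_zero] at hs
        cases hs with
        | cons _ h =>
          refine hl1 ⟨s.take ℓ, (List.take_sublist _ _).trans h, ?_, ?_⟩
          · rw [List.length_take, hlen]; omega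
          · exact List.Pairwise.sublist (List.take_sublist _ _) hsort
        | cons_cons _ h =>
          rename_i t
          -- s = 1 :: t with t decreasing below 1 : impossible unless t = []
          have ht : t = [] := by
            cases hx : t with
            | nil => rfl
            | cons y u =>
              exfalso
              have hmem : y ∈ t := by rw [hx]; exact List.mem_cons_self
              have hy2 := h2 y (h.subset hmem)
              have := (List.pairwise_cons.1 hsort).1 y hmem
              omega
          subst ht
          simp only [List.length_cons, List.length_nil] at hlen
          omega
      · rw [hr] at hs hmod
        simp only [List.length_cons, Nat.succ_lt_succ_iff] at hmod
        rw [rotate_cons_formula a j hmod.le] at hs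
        obtain ⟨s₁, s₂, rfl, h₁, h₂⟩ := List.sublist_append_iff.mp hs
        cases h₂ with
        | cons _ h =>
          refine hcycl ⟨j, s₁ ++ s₂, ?_, hlen, hsort⟩
          rw [List.rotate_eq_drop_append_take hmod.le]
          exact h₁.append h
        | cons_cons _ h =>
          rename_i s₃
          -- s₂ = 1 :: s₃ ; since decreasing, s₃ = []
          have hsort₂ : (1 :: s₃).Pairwise (· > ·) :=
            List.Pairwise.sublist (List.sublist_append_right _ _) hsort
          have hs₃ : s₃ = [] := by
            cases hx : s₃ with
            | nil => rfl
            | cons y u =>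
              exfalso
              have hmem : y ∈ s₃ := by rw [hx]; exact List.mem_cons_self
              have hy2 := h2 y ((h.trans (List.take_sublist _ _)).subset hmem)
              have := (List.pairwise_cons.1 hsort₂).1 y hmem
              omega
          subst hs₃
          refine hl1 ⟨s₁, h₁.trans (List.drop_sublist _ _), ?_, ?_⟩
          · simp only [List.length_append, List.length_cons, List.length_nil] at hlen
            omega
          · exact List.Pairwise.sublist (List.sublist_append_left _ _) hsort

theorem cyclic_linear_equiv (k ℓ : ℕ) (hk : 2 ≤ k) (hl : 2 ≤ ℓ) (a : List ℕ)
    (hperm : (1 :: a).Perm (List.range' 1 ((k-1)*(ℓ-1)+1))) :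
    (¬ IncCycSub (1 :: a) (k+1) ∧ ¬ DecCycSub (1 :: a) (ℓ+1)) ↔
      ((a.map (· - 1)).Perm (List.range' 1 ((k-1)*(ℓ-1))) ∧
       (¬ ∃ s : List ℕ, s.Sublist (a.map (· - 1)) ∧ s.length = k ∧ s.Pairwise (· < ·)) ∧
       (¬ ∃ s : List ℕ, s.Sublist (a.map (· - 1)) ∧ s.length = ℓ ∧ s.Pairwise (· > ·)) ∧
       ¬ IncCycSub (a.map (· - 1)) (k+1) ∧ ¬ DecCycSub (a.map (· - 1)) (ℓ+1)) := by
  set n := (k-1)*(ℓ-1) with hn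
  have hnpos : 0 < n := Nat.mul_pos (by omega) (by omega)
  have hsplit : List.range' 1 (n+1) = 1 :: List.range' 2 n := List.range'_succ ..
  have ha : a.Perm (List.range' 2 n) := by
    apply List.Perm.cons_inv (a := 1)
    rw [← hsplit]; exact hperm
  have h2 : ∀ x ∈ a, 2 ≤ x := by
    intro x hx
    have := (List.mem_range'_1).1 (ha.subset hx)
    omega
  have hne : a ≠ [] := by
    intro h
    have := ha.length_eq
    simp [h, List.length_range'] at this
    omega
  have hbperm : (a.map (· - 1)).Perm (List.range' 1 n) := by
    have := ha.map (· - 1)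
    rwa [map_sub_one_range' 1 n] at this
  have hlt : ∀ x y : ℕ, 2 ≤ x → 2 ≤ y → ((x-1 < y-1) ↔ x < y) := by intro x y hx hy; omega
  have hgt : ∀ x y : ℕ, 2 ≤ x → 2 ≤ y → ((x-1 > y-1) ↔ x > y) := by intro x y hx hy; omega
  rw [core k ℓ hk hl a hne h2]
  constructor
  · rintro ⟨c1, c2, c3, c4⟩
    refine ⟨hbperm, ?_, ?_, ?_, ?_⟩
    · rw [exists_sub_map_iff h2 hlt k]; exact c1
    · rw [exists_sub_map_iff h2 hgt ℓ]; exact c2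
    · show ¬ ∃ (r : ℕ) (s : List ℕ), _
      rw [cyc_sub_map_iff h2 hlt (k+1)]; exact c3
    · show ¬ ∃ (r : ℕ) (s : List ℕ), _
      rw [cyc_sub_map_iff h2 hgt (ℓ+1)]; exact c4
  · rintro ⟨-, c1, c2, c3, c4⟩
    rw [exists_sub_map_iff h2 hlt k] at c1
    rw [exists_sub_map_iff h2 hgt ℓ] at c2
    replace c3 : ¬ ∃ (r : ℕ) (s : List ℕ), s.Sublist ((a.map (· - 1)).rotate r) ∧
        s.length = k+1 ∧ s.Pairwise (· < ·) := c3
    replace c4 : ¬ ∃ (r : ℕ) (s : List ℕ), s.Sublist ((a.map (· - 1)).rotate r) ∧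
        s.length = ℓ+1 ∧ s.Pairwise (· > ·) := c4
    rw [cyc_sub_map_iff h2 hlt (k+1)] at c3
    rw [cyc_sub_map_iff h2 hgt (ℓ+1)] at c4
    exact ⟨c1, c2, c3, c4⟩
end

section
/- Let min(k,ℓ) ≥ 3 and let ρ = [a_1,...,a_{(k-1)(ℓ-1)}] be a permutation of {1,...,(k-1)(ℓ-1)} with no increasing linear subsequence of length k and no decreasing linear subsequence of length ℓ, such that viewed as a cyclic permutation it has no increasing cyclic sub-permutation of length k+1 and no decreasing cyclic sub-permutation of length ℓ+1. Then either a_{(j-1)(ℓ-1)+i} = (ℓ-1-i)(k-1)+j for all i ∈ [ℓ-1], j ∈ [k-1], or a_{(i-1)(k-1)+j} = (j-1)(ℓ-1)+(ℓ-i) for all i ∈ [ℓ-1], j ∈ [k-1]. -/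
/-- Data for the extremal cyclic Erdős–Szekeres argument. -/
structure ESData where
  K : ℕ
  L : ℕ
  hK : 2 ≤ K
  hL : 2 ≤ L
  v : ℕ → ℕ
  hlt : ∀ i, i < K * L → v i < K * L
  hinj : ∀ i, i < K * L → ∀ j, j < K * L → v i = v j → i = j
  H1 : ∀ l : List ℕ, (l.Pairwise fun i j => i < j ∧ v i < v j) → (∀ i ∈ l, i < K * L) →
    l.length ≤ K
  H2 : ∀ l : List ℕ, (l.Pairwise fun i j => i < j ∧ v j < v i) → (∀ i ∈ l, i < K * L) →
    l.length ≤ L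
  H3 : ∀ l₁ l₂ : List ℕ, (l₁.Pairwise fun i j => i < j ∧ v i < v j) → (∀ i ∈ l₁, i < K * L) →
    (l₂.Pairwise fun i j => i < j ∧ v i < v j) → (∀ i ∈ l₂, i < K * L) →
    (∀ i ∈ l₁, ∀ j ∈ l₂, i < j ∧ v j < v i) → l₁.length + l₂.length ≤ K + 1
  H4 : ∀ l₁ l₂ : List ℕ, (l₁.Pairwise fun i j => i < j ∧ v j < v i) → (∀ i ∈ l₁, i < K * L) →
    (l₂.Pairwise fun i j => i < j ∧ v j < v i) → (∀ i ∈ l₂, i < K * L) →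
    (∀ i ∈ l₁, ∀ j ∈ l₂, i < j ∧ v i < v j) → l₁.length + l₂.length ≤ L + 1

namespace ESData

variable (D : ESData)

def n : ℕ := D.K * D.L

def Inc (l : List ℕ) : Prop := (l.Pairwise fun i j => i < j ∧ D.v i < D.v j) ∧ ∀ i ∈ l, i < D.n

def Dec (l : List ℕ) : Prop := (l.Pairwise fun i j => i < j ∧ D.v j < D.v i) ∧ ∀ i ∈ l, i < D.n

theorem inc_len {l : List ℕ} (h : D.Inc l) : l.length ≤ D.K := D.H1 l h.1 h.2
theorem dec_len {l : List ℕ} (h : D.Dec l) : l.length ≤ D.L := D.H2 l h.1 h.2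
theorem inc_config {l₁ l₂ : List ℕ} (h1 : D.Inc l₁) (h2 : D.Inc l₂)
    (hx : ∀ i ∈ l₁, ∀ j ∈ l₂, i < j ∧ D.v j < D.v i) : l₁.length + l₂.length ≤ D.K + 1 :=
  D.H3 l₁ l₂ h1.1 h1.2 h2.1 h2.2 hx
theorem dec_config {l₁ l₂ : List ℕ} (h1 : D.Dec l₁) (h2 : D.Dec l₂)
    (hx : ∀ i ∈ l₁, ∀ j ∈ l₂, i < j ∧ D.v i < D.v j) : l₁.length + l₂.length ≤ D.L + 1 :=
  D.H4 l₁ l₂ h1.1 h1.2 h2.1 h2.2 hx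

theorem nK : D.K < D.n := by
  show D.K < D.K * D.L
  have := D.hL; have hK := D.hK
  have h2 : D.K * 2 ≤ D.K * D.L := Nat.mul_le_mul (le_refl _) D.hL
  omega

theorem nL : D.L < D.n := by
  show D.L < D.K * D.L
  have := D.hL; have hK := D.hK
  have h2 : 2 * D.L ≤ D.K * D.L := Nat.mul_le_mul D.hK (le_refl _)
  omega

theorem n_pos : 0 < D.n := lt_of_le_of_lt (Nat.zero_le _) D.nK

/-- property: there is an increasing chain ending at `x` of length `m`. -/
def RP (x m : ℕ) : Prop := ∃ l : List ℕ, D.Inc (l ++ [x]) ∧ l.length + 1 = m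

def CP (x m : ℕ) : Prop := ∃ l : List ℕ, D.Dec (l ++ [x]) ∧ l.length + 1 = m

open Classical in
noncomputable def R (x : ℕ) : ℕ := Nat.findGreatest (D.RP x) D.n

open Classical in
noncomputable def C (x : ℕ) : ℕ := Nat.findGreatest (D.CP x) D.n

theorem inc_append_last {l : List ℕ} {x : ℕ} (h : D.Inc (l ++ [x])) :
    ∀ y ∈ l, y < x ∧ D.v y < D.v x := by
  have := (List.pairwise_append.1 h.1).2.2
  intro y hy
  exact this y hy x (List.mem_singleton_self x)

theorem dec_append_last {l : List ℕ} {x : ℕ} (h : D.Dec (l ++ [x])) :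
    ∀ y ∈ l, y < x ∧ D.v x < D.v y := by
  have := (List.pairwise_append.1 h.1).2.2
  intro y hy
  exact this y hy x (List.mem_singleton_self x)

theorem RP_one {x : ℕ} (hx : x < D.n) : D.RP x 1 :=
  ⟨[], ⟨by simp, by simpa using hx⟩, by simp⟩

theorem CP_one {x : ℕ} (hx : x < D.n) : D.CP x 1 :=
  ⟨[], ⟨by simp, by simpa using hx⟩, by simp⟩

open Classical in
theorem R_ge1 {x : ℕ} (hx : x < D.n) : 1 ≤ D.R x :=
  Nat.le_findGreatest D.n_pos (D.RP_one hx)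

open Classical in
theorem C_ge1 {x : ℕ} (hx : x < D.n) : 1 ≤ D.C x :=
  Nat.le_findGreatest D.n_pos (D.CP_one hx)

open Classical in
theorem R_spec {x : ℕ} (hx : x < D.n) : D.RP x (D.R x) :=
  Nat.findGreatest_spec D.n_pos (D.RP_one hx)

open Classical in
theorem C_spec {x : ℕ} (hx : x < D.n) : D.CP x (D.C x) :=
  Nat.findGreatest_spec D.n_pos (D.CP_one hx)

theorem R_leK {x : ℕ} (hx : x < D.n) : D.R x ≤ D.K := by
  obtain ⟨l, hl, hlen⟩ := D.R_spec hx
  have := D.inc_len hl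
  simp at this; omega

theorem C_leL {x : ℕ} (hx : x < D.n) : D.C x ≤ D.L := by
  obtain ⟨l, hl, hlen⟩ := D.C_spec hx
  have := D.dec_len hl
  simp at this; omega

open Classical in
theorem R_ge {l : List ℕ} {x : ℕ} (h : D.Inc (l ++ [x])) : l.length + 1 ≤ D.R x := by
  have hle : l.length + 1 ≤ D.n := by
    have := D.inc_len h; simp at this; have := D.nK; omega
  exact Nat.le_findGreatest hle ⟨l, h, rfl⟩

open Classical in
theorem C_ge {l : List ℕ} {x : ℕ} (h : D.Dec (l ++ [x])) : l.length + 1 ≤ D.C x := by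
  have hle : l.length + 1 ≤ D.n := by
    have := D.dec_len h; simp at this; have := D.nL; omega
  exact Nat.le_findGreatest hle ⟨l, h, rfl⟩

theorem R_lt {x y : ℕ} (hx : x < D.n) (hy : y < D.n) (hxy : x < y) (hv : D.v x < D.v y) :
    D.R x < D.R y := by
  obtain ⟨l, hl, hlen⟩ := D.R_spec hx
  have h2 : D.Inc ((l ++ [x]) ++ [y]) := by
    constructor
    · rw [List.pairwise_append]
      refine ⟨hl.1, List.pairwise_singleton _ _, ?_⟩
      intro a ha b hb
      rw [List.mem_singleton] at hb; subst hb
      rcases List.mem_append.1 ha with h | h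
      · have := D.inc_append_last hl a h; exact ⟨lt_trans this.1 hxy, lt_trans this.2 hv⟩
      · rw [List.mem_singleton] at h; subst h; exact ⟨hxy, hv⟩
    · intro i hi
      rcases List.mem_append.1 hi with h | h
      · exact hl.2 i h
      · rw [List.mem_singleton] at h; subst h; exact hy
  have := D.R_ge h2
  simp at this; omega

theorem C_lt {x y : ℕ} (hx : x < D.n) (hy : y < D.n) (hxy : x < y) (hv : D.v y < D.v x) :
    D.C x < D.C y := by
  obtain ⟨l, hl, hlen⟩ := D.C_spec hx
  have h2 : D.Dec ((l ++ [x]) ++ [y]) := by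
    constructor
    · rw [List.pairwise_append]
      refine ⟨hl.1, List.pairwise_singleton _ _, ?_⟩
      intro a ha b hb
      rw [List.mem_singleton] at hb; subst hb
      rcases List.mem_append.1 ha with h | h
      · have := D.dec_append_last hl a h; exact ⟨lt_trans this.1 hxy, lt_trans hv this.2⟩
      · rw [List.mem_singleton] at h; subst h; exact ⟨hxy, hv⟩
    · intro i hi
      rcases List.mem_append.1 hi with h | h
      · exact hl.2 i h
      · rw [List.mem_singleton] at h; subst h; exact hy
  have := D.C_ge h2
  simp at this; omega

theorem v_ne {x y : ℕ} (hx : x < D.n) (hy : y < D.n) (hxy : x ≠ y) : D.v x ≠ D.v y :=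
  fun h => hxy (D.hinj x hx y hy h)

theorem pair_inj {x y : ℕ} (hx : x < D.n) (hy : y < D.n) (hR : D.R x = D.R y)
    (hC : D.C x = D.C y) : x = y := by
  by_contra hne
  rcases lt_or_gt_of_ne hne with h | h
  · rcases lt_or_gt_of_ne (D.v_ne hx hy hne) with hv | hv
    · exact absurd hR (ne_of_lt (D.R_lt hx hy h hv))
    · exact absurd hC (ne_of_lt (D.C_lt hx hy h hv))
  · rcases lt_or_gt_of_ne (D.v_ne hy hx (Ne.symm hne)) with hv | hv
    · exact absurd hR.symm (ne_of_lt (D.R_lt hy hx h hv))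
    · exact absurd hC.symm (ne_of_lt (D.C_lt hy hx h hv))

noncomputable def toGrid : Fin D.n → Fin D.K × Fin D.L := fun i =>
  (⟨D.R i - 1, by have h1 := D.R_ge1 i.isLt; have h2 := D.R_leK i.isLt; omega⟩,
   ⟨D.C i - 1, by have h1 := D.C_ge1 i.isLt; have h2 := D.C_leL i.isLt; omega⟩)

theorem toGrid_bij : Function.Bijective D.toGrid := by
  rw [Fintype.bijective_iff_injective_and_card]
  constructor
  · intro i j h
    simp only [toGrid, Prod.mk.injEq, Fin.mk.injEq] at h
    have h1 := D.R_ge1 i.isLt; have h2 := D.R_ge1 j.isLt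
    have h3 := D.C_ge1 i.isLt; have h4 := D.C_ge1 j.isLt
    have hR : D.R i = D.R j := by omega
    have hC : D.C i = D.C j := by omega
    exact Fin.ext (D.pair_inj i.isLt j.isLt hR hC)
  · simp [n]
    exact Fintype.card_fin _

noncomputable def gridEquiv : Fin D.n ≃ (Fin D.K × Fin D.L) := Equiv.ofBijective _ D.toGrid_bij

noncomputable def pos (r c : ℕ) : ℕ :=
  if h : r < D.K ∧ c < D.L then (D.gridEquiv.symm (⟨r, h.1⟩, ⟨c, h.2⟩)).val else 0

theorem pos_lt {r c : ℕ} (hr : r < D.K) (hc : c < D.L) : D.pos r c < D.n := by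
  rw [pos, dif_pos ⟨hr, hc⟩]; exact Fin.isLt _

theorem toGrid_pos {r c : ℕ} (hr : r < D.K) (hc : c < D.L) :
    D.toGrid ⟨D.pos r c, D.pos_lt hr hc⟩ = (⟨r, hr⟩, ⟨c, hc⟩) := by
  have : D.pos r c = (D.gridEquiv.symm (⟨r, hr⟩, ⟨c, hc⟩)).val := by
    rw [pos, dif_pos ⟨hr, hc⟩]
  have h2 : (⟨D.pos r c, D.pos_lt hr hc⟩ : Fin D.n) = D.gridEquiv.symm (⟨r, hr⟩, ⟨c, hc⟩) :=
    Fin.ext this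
  rw [h2]
  exact D.gridEquiv.apply_symm_apply _

theorem R_pos {r c : ℕ} (hr : r < D.K) (hc : c < D.L) : D.R (D.pos r c) = r + 1 := by
  have h := D.toGrid_pos hr hc
  simp only [toGrid, Prod.mk.injEq, Fin.mk.injEq] at h
  have := D.R_ge1 (D.pos_lt hr hc)
  omega

theorem C_pos {r c : ℕ} (hr : r < D.K) (hc : c < D.L) : D.C (D.pos r c) = c + 1 := by
  have h := D.toGrid_pos hr hc
  simp only [toGrid, Prod.mk.injEq, Fin.mk.injEq] at h
  have := D.C_ge1 (D.pos_lt hr hc)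
  omega

theorem pos_unique {x r c : ℕ} (hx : x < D.n) (hr : r < D.K) (hc : c < D.L)
    (hRx : D.R x = r + 1) (hCx : D.C x = c + 1) : D.pos r c = x :=
  D.pair_inj (D.pos_lt hr hc) hx (by rw [D.R_pos hr hc, hRx]) (by rw [D.C_pos hr hc, hCx])

theorem exists_pos {x : ℕ} (hx : x < D.n) :
    ∃ r c, r < D.K ∧ c < D.L ∧ D.R x = r + 1 ∧ D.C x = c + 1 ∧ D.pos r c = x := by
  have h1 := D.R_ge1 hx; have h2 := D.R_leK hx
  have h3 := D.C_ge1 hx; have h4 := D.C_leL hx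
  refine ⟨D.R x - 1, D.C x - 1, by omega, by omega, by omega, by omega, ?_⟩
  exact D.pos_unique hx (by omega) (by omega) (by omega) (by omega)

theorem v_surj {y : ℕ} (hy : y < D.n) : ∃ x, x < D.n ∧ D.v x = y := by
  have himg : (Finset.range D.n).image D.v = Finset.range D.n := by
    apply Finset.eq_of_subset_of_card_le
    · intro z hz
      simp only [Finset.mem_image, Finset.mem_range] at hz ⊢
      obtain ⟨x, hx, hvx⟩ := hz
      exact hvx ▸ D.hlt x hx
    · rw [Finset.card_image_of_injOn, Finset.card_range]
      intro i hi j hj hij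
      exact D.hinj i (Finset.mem_range.1 hi) j (Finset.mem_range.1 hj) hij
  have : y ∈ (Finset.range D.n).image D.v := himg.symm ▸ Finset.mem_range.2 hy
  simp only [Finset.mem_image, Finset.mem_range] at this
  obtain ⟨x, hx, hvx⟩ := this
  exact ⟨x, hx, hvx⟩

theorem samecol {x y : ℕ} (hy : y < D.n) (hxy : x < y) (hC : D.C x = D.C y) :
    D.v x < D.v y ∧ D.R x < D.R y := by
  have hx : x < D.n := lt_trans hxy hy
  rcases lt_or_gt_of_ne (D.v_ne hx hy (ne_of_lt hxy)) with hv | hv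
  · exact ⟨hv, D.R_lt hx hy hxy hv⟩
  · exact absurd hC (ne_of_lt (D.C_lt hx hy hxy hv))

theorem samerow {x y : ℕ} (hy : y < D.n) (hxy : x < y) (hR : D.R x = D.R y) :
    D.v y < D.v x ∧ D.C x < D.C y := by
  have hx : x < D.n := lt_trans hxy hy
  rcases lt_or_gt_of_ne (D.v_ne hx hy (ne_of_lt hxy)) with hv | hv
  · exact absurd hR (ne_of_lt (D.R_lt hx hy hxy hv))
  · exact ⟨hv, D.C_lt hx hy hxy hv⟩

theorem pos_lt_pos_r {r1 r2 c : ℕ} (h12 : r1 < r2) (hr2 : r2 < D.K) (hc : c < D.L) :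
    D.pos r1 c < D.pos r2 c := by
  have hr1 : r1 < D.K := lt_trans h12 hr2
  have hne : D.pos r1 c ≠ D.pos r2 c := by
    intro h
    have := D.R_pos hr1 hc
    rw [h, D.R_pos hr2 hc] at this; omega
  rcases lt_or_gt_of_ne hne with h | h
  · exact h
  · exfalso
    have := D.samecol (D.pos_lt hr1 hc) h (by rw [D.C_pos hr1 hc, D.C_pos hr2 hc])
    rw [D.R_pos hr1 hc, D.R_pos hr2 hc] at this
    omega

theorem pos_lt_pos_c {r c1 c2 : ℕ} (h12 : c1 < c2) (hr : r < D.K) (hc2 : c2 < D.L) :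
    D.pos r c1 < D.pos r c2 := by
  have hc1 : c1 < D.L := lt_trans h12 hc2
  have hne : D.pos r c1 ≠ D.pos r c2 := by
    intro h
    have := D.C_pos hr hc1
    rw [h, D.C_pos hr hc2] at this; omega
  rcases lt_or_gt_of_ne hne with h | h
  · exact h
  · exfalso
    have := D.samerow (D.pos_lt hr hc1) h (by rw [D.R_pos hr hc1, D.R_pos hr hc2])
    rw [D.C_pos hr hc1, D.C_pos hr hc2] at this
    omega

theorem v_pos_lt_r {r1 r2 c : ℕ} (h12 : r1 < r2) (hr2 : r2 < D.K) (hc : c < D.L) :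
    D.v (D.pos r1 c) < D.v (D.pos r2 c) :=
  (D.samecol (D.pos_lt hr2 hc) (D.pos_lt_pos_r h12 hr2 hc)
    (by rw [D.C_pos (lt_trans h12 hr2) hc, D.C_pos hr2 hc])).1

theorem v_pos_gt_c {r c1 c2 : ℕ} (h12 : c1 < c2) (hr : r < D.K) (hc2 : c2 < D.L) :
    D.v (D.pos r c2) < D.v (D.pos r c1) :=
  (D.samerow (D.pos_lt hr hc2) (D.pos_lt_pos_c h12 hr hc2)
    (by rw [D.R_pos hr (lt_trans h12 hc2), D.R_pos hr hc2])).1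

theorem pos_le_pos_r {r1 r2 c : ℕ} (h12 : r1 ≤ r2) (hr2 : r2 < D.K) (hc : c < D.L) :
    D.pos r1 c ≤ D.pos r2 c := by
  rcases eq_or_lt_of_le h12 with h | h
  · rw [h]
  · exact le_of_lt (D.pos_lt_pos_r h hr2 hc)

theorem pos_le_pos_c {r c1 c2 : ℕ} (h12 : c1 ≤ c2) (hr : r < D.K) (hc2 : c2 < D.L) :
    D.pos r c1 ≤ D.pos r c2 := by
  rcases eq_or_lt_of_le h12 with h | h
  · rw [h]
  · exact le_of_lt (D.pos_lt_pos_c h hr hc2)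

theorem v_pos_le_r {r1 r2 c : ℕ} (h12 : r1 ≤ r2) (hr2 : r2 < D.K) (hc : c < D.L) :
    D.v (D.pos r1 c) ≤ D.v (D.pos r2 c) := by
  rcases eq_or_lt_of_le h12 with h | h
  · rw [h]
  · exact le_of_lt (D.v_pos_lt_r h hr2 hc)

theorem v_pos_le_c {r c1 c2 : ℕ} (h12 : c1 ≤ c2) (hr : r < D.K) (hc2 : c2 < D.L) :
    D.v (D.pos r c2) ≤ D.v (D.pos r c1) := by
  rcases eq_or_lt_of_le h12 with h | h
  · rw [h]
  · exact le_of_lt (D.v_pos_gt_c h hr hc2)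

/-- The column chain from row `r1` to row `r2` in column `c`. -/
noncomputable def colChain (r1 r2 c : ℕ) : List ℕ :=
  (List.range (r2 + 1 - r1)).map fun t => D.pos (r1 + t) c

/-- The row chain from column `c1` to column `c2` in row `r`. -/
noncomputable def rowChain (c1 c2 r : ℕ) : List ℕ :=
  (List.range (c2 + 1 - c1)).map fun t => D.pos r (c1 + t)

theorem colChain_length (r1 r2 c : ℕ) : (D.colChain r1 r2 c).length = r2 + 1 - r1 := by
  simp [colChain]

theorem rowChain_length (c1 c2 r : ℕ) : (D.rowChain c1 c2 r).length = c2 + 1 - c1 := by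
  simp [rowChain]

theorem colChain_mem {r1 r2 c x : ℕ} (h : x ∈ D.colChain r1 r2 c) :
    ∃ t, r1 ≤ t ∧ t ≤ r2 ∧ x = D.pos t c := by
  simp only [colChain, List.mem_map, List.mem_range] at h
  obtain ⟨t, ht, hx⟩ := h
  exact ⟨r1 + t, Nat.le_add_right _ _, by omega, hx.symm⟩

theorem rowChain_mem {c1 c2 r x : ℕ} (h : x ∈ D.rowChain c1 c2 r) :
    ∃ t, c1 ≤ t ∧ t ≤ c2 ∧ x = D.pos r t := by
  simp only [rowChain, List.mem_map, List.mem_range] at h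
  obtain ⟨t, ht, hx⟩ := h
  exact ⟨c1 + t, Nat.le_add_right _ _, by omega, hx.symm⟩

theorem colChain_inc {r1 r2 c : ℕ} (hr2 : r2 < D.K) (hc : c < D.L) :
    D.Inc (D.colChain r1 r2 c) := by
  constructor
  · rw [colChain, List.pairwise_map]
    apply List.Pairwise.imp_of_mem (R := (· < ·))
    · intro a b ha hb hab
      rw [List.mem_range] at ha hb
      have hb2 : r1 + b < D.K := by omega
      exact ⟨D.pos_lt_pos_r (by omega) hb2 hc, D.v_pos_lt_r (by omega) hb2 hc⟩
    · exact List.pairwise_lt_range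
  · intro x hx
    obtain ⟨t, h1, h2, h3⟩ := D.colChain_mem hx
    exact h3 ▸ D.pos_lt (by omega) hc

theorem rowChain_dec {c1 c2 r : ℕ} (hr : r < D.K) (hc2 : c2 < D.L) :
    D.Dec (D.rowChain c1 c2 r) := by
  constructor
  · rw [rowChain, List.pairwise_map]
    apply List.Pairwise.imp_of_mem (R := (· < ·))
    · intro a b ha hb hab
      rw [List.mem_range] at ha hb
      have hb2 : c1 + b < D.L := by omega
      exact ⟨D.pos_lt_pos_c (by omega) hr hb2, D.v_pos_gt_c (by omega) hr hb2⟩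
    · exact List.pairwise_lt_range
  · intro x hx
    obtain ⟨t, h1, h2, h3⟩ := D.rowChain_mem hx
    exact h3 ▸ D.pos_lt hr (by omega)

theorem R_eq_one {x : ℕ} (hx : x < D.n) (h : ∀ y, y < x → ¬ D.v y < D.v x) : D.R x = 1 := by
  have h1 := D.R_ge1 hx
  by_contra hne
  obtain ⟨l, hl, hlen⟩ := D.R_spec hx
  have hlpos : l ≠ [] := by
    intro he; rw [he] at hlen; simp at hlen; omega
  obtain ⟨y, hy⟩ := List.exists_mem_of_ne_nil l hlpos
  have := D.inc_append_last hl y hy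
  exact h y this.1 this.2

theorem C_eq_one {x : ℕ} (hx : x < D.n) (h : ∀ y, y < x → ¬ D.v x < D.v y) : D.C x = 1 := by
  have h1 := D.C_ge1 hx
  by_contra hne
  obtain ⟨l, hl, hlen⟩ := D.C_spec hx
  have hlpos : l ≠ [] := by
    intro he; rw [he] at hlen; simp at hlen; omega
  obtain ⟨y, hy⟩ := List.exists_mem_of_ne_nil l hlpos
  have := D.dec_append_last hl y hy
  exact h y this.1 this.2

theorem v_zero_coords {x : ℕ} (hx : x < D.n) (hv : D.v x = 0) :
    D.R x = 1 ∧ D.C x = D.L := by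
  have hR : D.R x = 1 := D.R_eq_one hx (fun y hy h => by omega)
  obtain ⟨r, c, hr, hc, hRx, hCx, hpos⟩ := D.exists_pos hx
  refine ⟨hR, ?_⟩
  by_contra hne
  have hc1 : c + 1 < D.L := by omega
  have := D.v_pos_gt_c (Nat.lt_succ_self c) hr hc1
  rw [hpos, hv] at this
  omega

theorem v_max_coords {x : ℕ} (hx : x < D.n) (hv : D.v x = D.n - 1) :
    D.C x = 1 ∧ D.R x = D.K := by
  have hC : D.C x = 1 := D.C_eq_one hx (fun y hy h => by
    have := D.hlt y (lt_trans hy hx)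
    have hn : D.n = D.K * D.L := rfl
    omega)
  obtain ⟨r, c, hr, hc, hRx, hCx, hpos⟩ := D.exists_pos hx
  refine ⟨hC, ?_⟩
  by_contra hne
  have hr1 : r + 1 < D.K := by omega
  have h2 := D.v_pos_lt_r (show r < r + 1 by omega) hr1 hc
  rw [hpos, hv] at h2
  have := D.hlt (D.pos (r+1) c) (D.pos_lt hr1 hc)
  have hn := D.n_pos
  have hn2 : D.n = D.K * D.L := rfl
  omega

theorem index_zero_coords : D.R 0 = 1 ∧ D.C 0 = 1 :=
  ⟨D.R_eq_one D.n_pos (fun y hy _ => absurd hy (Nat.not_lt_zero y)),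
   D.C_eq_one D.n_pos (fun y hy _ => absurd hy (Nat.not_lt_zero y))⟩

theorem index_last_coords : D.R (D.n - 1) = D.K ∧ D.C (D.n - 1) = D.L := by
  have hx : D.n - 1 < D.n := by have := D.n_pos; omega
  obtain ⟨r, c, hr, hc, hRx, hCx, hpos⟩ := D.exists_pos hx
  constructor
  · by_contra hne
    have hr1 : r + 1 < D.K := by omega
    have := D.pos_lt_pos_r (show r < r + 1 by omega) hr1 hc
    rw [hpos] at this
    have := D.pos_lt hr1 hc
    omega
  · by_contra hne
    have hc1 : c + 1 < D.L := by omega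
    have := D.pos_lt_pos_c (show c < c + 1 by omega) hr hc1
    rw [hpos] at this
    have := D.pos_lt hr hc1
    omega

/-- Key value lemma: under the case hypothesis (value 0 positioned before value max),
top of column `c1` is below bottom of column `c2` whenever `c2 < c1`. -/
theorem val_lemma (hio : D.pos 0 (D.L - 1) < D.pos (D.K - 1) 0)
    {c1 c2 : ℕ} (h21 : c2 < c1) (hc1 : c1 < D.L) :
    D.v (D.pos (D.K - 1) c1) < D.v (D.pos 0 c2) := by
  have hK := D.hK; have hL := D.hL
  have hK1 : D.K - 1 < D.K := by omega
  have h0K : (0:ℕ) < D.K := by omega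
  have hc2 : c2 < D.L := lt_trans h21 hc1
  have hLL : D.L - 1 < D.L := by omega
  have hne : D.pos (D.K - 1) c1 ≠ D.pos 0 c2 := by
    intro h
    have := D.R_pos hK1 hc1
    rw [h, D.R_pos h0K hc2] at this
    omega
  rcases lt_or_gt_of_ne (D.v_ne (D.pos_lt hK1 hc1) (D.pos_lt h0K hc2) hne) with h | h
  · exact h
  exfalso
  have hcfg := D.dec_config (D.rowChain_dec h0K hLL) (D.rowChain_dec hK1 hc1)
    (l₁ := D.rowChain c2 (D.L - 1) 0) (l₂ := D.rowChain 0 c1 (D.K - 1)) ?_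
  · rw [D.rowChain_length, D.rowChain_length] at hcfg
    omega
  · intro p hp q hq
    obtain ⟨t, ht1, ht2, hteq⟩ := D.rowChain_mem hp
    obtain ⟨s, hs1, hs2, hseq⟩ := D.rowChain_mem hq
    subst hteq hseq
    constructor
    · calc D.pos 0 t ≤ D.pos 0 (D.L - 1) := D.pos_le_pos_c (by omega) h0K hLL
      _ < D.pos (D.K - 1) 0 := hio
      _ ≤ D.pos (D.K - 1) s := D.pos_le_pos_c (by omega) hK1 (by omega)
    · calc D.v (D.pos 0 t) ≤ D.v (D.pos 0 c2) := D.v_pos_le_c ht1 h0K (by omega)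
      _ < D.v (D.pos (D.K - 1) c1) := h
      _ ≤ D.v (D.pos (D.K - 1) s) := D.v_pos_le_c hs2 hK1 hc1

theorem inc_sublist {l1 l2 : List ℕ} (h : l1.Sublist l2) (h2 : D.Inc l2) : D.Inc l1 :=
  ⟨h2.1.sublist h, fun i hi => h2.2 i (h.mem hi)⟩

theorem div_mod_coords {r c : ℕ} (hc : c < D.L) :
    (r * D.L + c) / D.L = r ∧ (r * D.L + c) % D.L = c := by
  have hL : 0 < D.L := by have := D.hL; omega
  constructor
  · rw [show r * D.L + c = c + r * D.L by omega, Nat.add_mul_div_right c r hL,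
      Nat.div_eq_of_lt hc]
    omega
  · rw [show r * D.L + c = c + r * D.L by omega, Nat.add_mul_mod_self_right,
      Nat.mod_eq_of_lt hc]

theorem coords_eq (hio : D.pos 0 (D.L - 1) < D.pos (D.K - 1) 0) :
    ∀ m, m < D.n → D.R m = m / D.L + 1 ∧ D.C m = m % D.L + 1 := by
  intro m
  induction m using Nat.strong_induction_on with
  | _ m IH =>
  intro hm
  have hK := D.hK; have hL := D.hL
  have hL0 : 0 < D.L := by omega
  obtain ⟨r0, j0, hr0def, hj0def⟩ : ∃ r0 j0, r0 = m / D.L ∧ j0 = m % D.L :=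
    ⟨_, _, rfl, rfl⟩
  have hr0 : r0 < D.K := by
    rw [hr0def]
    rw [Nat.div_lt_iff_lt_mul hL0]
    exact hm
  have hj0 : j0 < D.L := by rw [hj0def]; exact Nat.mod_lt m hL0
  have hm_eq : r0 * D.L + j0 = m := by
    rw [hr0def, hj0def, Nat.mul_comm]; exact Nat.div_add_mod m D.L
  -- placed characterization
  have placed : ∀ r c, r < D.K → c < D.L → (r * D.L + c < m ↔ D.pos r c < m) := by
    intro r c hr hc
    constructor
    · intro h
      have hxn : r * D.L + c < D.n := lt_trans h hm
      obtain ⟨h1, h2⟩ := IH (r * D.L + c) h hxn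
      obtain ⟨hd, hmo⟩ := D.div_mod_coords (r := r) hc
      rw [hd] at h1; rw [hmo] at h2
      rw [D.pos_unique hxn hr hc h1 h2]
      exact h
    · intro h
      obtain ⟨h1, h2⟩ := IH (D.pos r c) h (lt_trans h hm)
      rw [D.R_pos hr hc] at h1
      rw [D.C_pos hr hc] at h2
      have hd : D.pos r c / D.L = r := by omega
      have hmo : D.pos r c % D.L = c := by omega
      have := Nat.div_add_mod (D.pos r c) D.L
      rw [hd, hmo, Nat.mul_comm] at this
      omega
  obtain ⟨ρ, γ, hρ, hγ, hRm, hCm, hposm⟩ := D.exists_pos hm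
  have hnotlt : ¬ (ρ * D.L + γ < m) := by
    intro h
    have := (placed ρ γ hρ hγ).1 h
    rw [hposm] at this
    omega
  -- ρ ≥ r0
  have hρ_ge : r0 ≤ ρ := by
    by_contra hcon
    have h1 : ρ + 1 ≤ r0 := by omega
    have h2 : (ρ + 1) * D.L ≤ r0 * D.L := Nat.mul_le_mul_right _ h1
    have h3 : ρ * D.L + γ < (ρ + 1) * D.L := by
      have : (ρ + 1) * D.L = ρ * D.L + D.L := by ring
      omega
    omega
  -- upper bound on R m
  have hub : D.R m ≤ r0 + 2 ∧ (j0 = 0 → D.R m ≤ r0 + 1) := by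
    obtain ⟨l, hl, hlen⟩ := D.R_spec hm
    rcases List.eq_nil_or_concat l with hnil | ⟨l', z, hconcat⟩
    · rw [hnil] at hlen; simp at hlen; omega
    · rw [List.concat_eq_append] at hconcat
      have hz : z ∈ l := by rw [hconcat]; simp
      have hzm : z < m := (D.inc_append_last hl z hz).1
      have hzn : z < D.n := lt_trans hzm hm
      have hsub : D.Inc (l' ++ [z]) := by
        apply D.inc_sublist _ hl
        rw [hconcat]
        exact (l' ++ [z]).sublist_append_left [m]
      have hRz := D.R_ge hsub
      obtain ⟨hz1, _⟩ := IH z hzm hzn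
      constructor
      · have : z / D.L ≤ r0 := by
          rw [hr0def]; exact Nat.div_le_div_right (le_of_lt hzm)
        have hlc : l.length = l'.length + 1 := by rw [hconcat]; simp
        omega
      · intro hj00
        have hmz : z < r0 * D.L := by omega
        have : z / D.L < r0 := by
          rw [Nat.div_lt_iff_lt_mul hL0]
          omega
        have hlc : l.length = l'.length + 1 := by rw [hconcat]; simp
        omega
  -- case split on j0
  rcases Nat.eq_zero_or_pos j0 with hj00 | hj0pos
  · -- j0 = 0 : ρ = r0, γ = 0
    have hρr0 : ρ = r0 := by
      have := hub.2 hj00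
      omega
    have hmul : ρ * D.L = r0 * D.L := by rw [hρr0]
    have hγ0 : γ = 0 := by
      by_contra hcon
      have h1 : D.pos ρ 0 < D.pos ρ γ := D.pos_lt_pos_c (by omega) hρ hγ
      rw [hposm] at h1
      have := (placed ρ 0 hρ hL0).2 h1
      omega
    omega
  · -- j0 ≥ 1
    have hρcase : ρ = r0 ∨ ρ = r0 + 1 := by
      have := hub.1
      omega
    rcases hρcase with hρr0 | hρr1
    · -- ρ = r0 : γ = j0
      have hmul : ρ * D.L = r0 * D.L := by rw [hρr0]
      have hγj0 : γ = j0 := by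
        rcases lt_trichotomy γ j0 with h | h | h
        · exfalso; apply hnotlt; omega
        · exact h
        · exfalso
          have h1 : D.pos ρ j0 < D.pos ρ γ := D.pos_lt_pos_c h hρ hγ
          rw [hposm] at h1
          have := (placed ρ j0 hρ hj0).2 h1
          omega
      omega
    · -- ρ = r0 + 1 : contradiction via cyclic config
      exfalso
      subst hρr1
      have hγlt : γ < j0 := by
        have h1 : D.pos r0 γ < D.pos (r0 + 1) γ := D.pos_lt_pos_r (by omega) hρ hγ
        rw [hposm] at h1
        have := (placed r0 γ (by omega) hγ).2 h1
        omega
      have hmlt : m < D.pos r0 j0 := by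
        have hne : D.pos r0 j0 ≠ m := by
          intro h
          have := D.C_pos (show r0 < D.K by omega) hj0
          rw [h, hCm] at this
          omega
        rcases lt_or_gt_of_ne hne with h | h
        · exfalso
          have := (placed r0 j0 (by omega) hj0).2 h
          omega
        · exact h
      -- the two chains
      have hKm1 : D.K - 1 < D.K := by omega
      have hC2 : D.Inc (D.colChain 0 r0 γ ++ [m]) := by
        constructor
        · rw [List.pairwise_append]
          refine ⟨(D.colChain_inc (by omega) hγ).1, List.pairwise_singleton _ _, ?_⟩
          intro p hp b hb
          rw [List.mem_singleton] at hb
          rw [hb]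
          obtain ⟨t, ht1, ht2, hteq⟩ := D.colChain_mem hp
          subst hteq
          have hple : D.pos t γ ≤ D.pos r0 γ := D.pos_le_pos_r ht2 (by omega) hγ
          have hplt : D.pos r0 γ < m := by rw [← hposm]; exact D.pos_lt_pos_r (by omega) hρ hγ
          have hsc := D.samecol hm (lt_of_le_of_lt hple hplt)
            (by rw [D.C_pos (show t < D.K by omega) hγ, hCm])
          exact ⟨lt_of_le_of_lt hple hplt, hsc.1⟩
        · intro i hi
          rcases List.mem_append.1 hi with h | h
          · exact (D.colChain_inc (by omega) hγ).2 i h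
          · rw [List.mem_singleton] at h; subst h; exact hm
      have hcfg := D.inc_config hC2 (D.colChain_inc hKm1 hj0) (l₂ := D.colChain r0 (D.K - 1) j0) ?_
      · rw [List.length_append, D.colChain_length, D.colChain_length] at hcfg
        simp at hcfg
        omega
      · intro p hp q hq
        obtain ⟨s, hs1, hs2, hseq⟩ := D.colChain_mem hq
        subst hseq
        have hqge : D.pos r0 j0 ≤ D.pos s j0 := D.pos_le_pos_r hs1 (by omega) hj0
        have hvq : D.v (D.pos s j0) ≤ D.v (D.pos (D.K - 1) j0) := D.v_pos_le_r hs2 hKm1 hj0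
        have hval := D.val_lemma hio hγlt hj0
        have hplt0 : D.pos r0 γ < m := by
          rw [← hposm]; exact D.pos_lt_pos_r (by omega) hρ hγ
        have hvp : D.v (D.pos 0 γ) ≤ D.v p := by
          rcases List.mem_append.1 hp with h | h
          · obtain ⟨t, ht1, ht2, hteq⟩ := D.colChain_mem h
            subst hteq
            exact D.v_pos_le_r (Nat.zero_le t) (by omega) hγ
          · rw [List.mem_singleton] at h
            rw [h]
            have hsc := D.samecol hm hplt0
              (by rw [D.C_pos (show r0 < D.K by omega) hγ, hCm])
            have := D.v_pos_le_r (Nat.zero_le r0) (show r0 < D.K by omega) hγ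
            omega
        have hpm : p ≤ m := by
          rcases List.mem_append.1 hp with h | h
          · obtain ⟨t, ht1, ht2, hteq⟩ := D.colChain_mem h
            subst hteq
            have hple : D.pos t γ ≤ D.pos r0 γ := D.pos_le_pos_r ht2 (by omega) hγ
            omega
          · rw [List.mem_singleton] at h; omega
        exact ⟨by omega, by omega⟩

theorem pos_eq (hio : D.pos 0 (D.L - 1) < D.pos (D.K - 1) 0)
    {r c : ℕ} (hr : r < D.K) (hc : c < D.L) : D.pos r c = r * D.L + c := by
  have hx : r * D.L + c < D.n := by
    have h1 : r + 1 ≤ D.K := hr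
    have h2 : (r + 1) * D.L ≤ D.K * D.L := Nat.mul_le_mul_right _ h1
    have h3 : (r + 1) * D.L = r * D.L + D.L := by ring
    have : D.n = D.K * D.L := rfl
    omega
  obtain ⟨h1, h2⟩ := D.coords_eq hio (r * D.L + c) hx
  obtain ⟨hd, hmo⟩ := D.div_mod_coords (r := r) hc
  rw [hd] at h1; rw [hmo] at h2
  exact D.pos_unique hx hr hc h1 h2

section Values

theorem relB (hio : D.pos 0 (D.L - 1) < D.pos (D.K - 1) 0)
    {r' r'' c' c'' : ℕ} (hrr : r' < r'') (hr'' : r'' < D.K) (hcc : c'' ≤ c') (hc' : c' < D.L) :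
    D.v (D.pos r' c') < D.v (D.pos r'' c'') := by
  have hK := D.hK; have hL := D.hL
  have hc'' : c'' < D.L := lt_of_le_of_lt hcc hc'
  have hr' : r' < D.K := lt_trans hrr hr''
  have hne : D.pos r' c' ≠ D.pos r'' c'' := by
    intro h
    have := D.R_pos hr' hc'
    rw [h, D.R_pos hr'' hc''] at this; omega
  rcases lt_or_gt_of_ne (D.v_ne (D.pos_lt hr' hc') (D.pos_lt hr'' hc'') hne) with h | h
  · exact h
  exfalso
  have hbridge : (r' + 1) * D.L ≤ r'' * D.L := Nat.mul_le_mul_right _ (by omega)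
  have hdist : (r' + 1) * D.L = r' * D.L + D.L := by ring
  have hdec : D.Dec (D.rowChain 0 c' r' ++ D.rowChain c'' (D.L - 1) r'') := by
    constructor
    · rw [List.pairwise_append]
      refine ⟨(D.rowChain_dec hr' hc').1, (D.rowChain_dec hr'' (by omega)).1, ?_⟩
      intro p hp q hq
      obtain ⟨t, ht1, ht2, hteq⟩ := D.rowChain_mem hp
      obtain ⟨s, hs1, hs2, hseq⟩ := D.rowChain_mem hq
      subst hteq hseq
      constructor
      · rw [D.pos_eq hio hr' (by omega), D.pos_eq hio hr'' (by omega)]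
        omega
      · calc D.v (D.pos r'' s) ≤ D.v (D.pos r'' c'') := D.v_pos_le_c hs1 hr'' (by omega)
        _ < D.v (D.pos r' c') := h
        _ ≤ D.v (D.pos r' t) := D.v_pos_le_c ht2 hr' hc'
    · intro x hx
      rcases List.mem_append.1 hx with hx | hx
      · exact (D.rowChain_dec hr' hc').2 x hx
      · exact (D.rowChain_dec hr'' (show D.L - 1 < D.L by omega)).2 x hx
  have := D.dec_len hdec
  rw [List.length_append, D.rowChain_length, D.rowChain_length] at this
  omega

theorem relC (hio : D.pos 0 (D.L - 1) < D.pos (D.K - 1) 0)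
    {r' r'' c' c'' : ℕ} (hrr : r' < r'') (hr'' : r'' < D.K) (hcc : c' < c'') (hc'' : c'' < D.L) :
    D.v (D.pos r'' c'') < D.v (D.pos r' c') := by
  have hK := D.hK; have hL := D.hL
  have hc' : c' < D.L := lt_trans hcc hc''
  have hr' : r' < D.K := lt_trans hrr hr''
  have hne : D.pos r'' c'' ≠ D.pos r' c' := by
    intro h
    have := D.R_pos hr'' hc''
    rw [h, D.R_pos hr' hc'] at this; omega
  rcases lt_or_gt_of_ne (D.v_ne (D.pos_lt hr'' hc'') (D.pos_lt hr' hc') hne) with h | h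
  · exact h
  exfalso
  have hbridge : (r' + 1) * D.L ≤ r'' * D.L := Nat.mul_le_mul_right _ (by omega)
  have hdist : (r' + 1) * D.L = r' * D.L + D.L := by ring
  have hcfg := D.dec_config (D.rowChain_dec hr' (show D.L - 1 < D.L by omega))
    (D.rowChain_dec hr'' hc'')
    (l₁ := D.rowChain c' (D.L - 1) r') (l₂ := D.rowChain 0 c'' r'') ?_
  · rw [D.rowChain_length, D.rowChain_length] at hcfg
    omega
  · intro p hp q hq
    obtain ⟨t, ht1, ht2, hteq⟩ := D.rowChain_mem hp
    obtain ⟨s, hs1, hs2, hseq⟩ := D.rowChain_mem hq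
    subst hteq hseq
    constructor
    · rw [D.pos_eq hio hr' (by omega), D.pos_eq hio hr'' (by omega)]
      omega
    · calc D.v (D.pos r' t) ≤ D.v (D.pos r' c') := D.v_pos_le_c ht1 hr' (by omega)
      _ < D.v (D.pos r'' c'') := h
      _ ≤ D.v (D.pos r'' s) := D.v_pos_le_c hs2 hr'' hc''

/-- target value function -/
def g (m : ℕ) : ℕ := (D.L - 1 - m % D.L) * D.K + m / D.L

theorem pos_of_self (hio : D.pos 0 (D.L - 1) < D.pos (D.K - 1) 0) {m : ℕ} (hm : m < D.n) :
    D.pos (m / D.L) (m % D.L) = m := by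
  have hL0 : 0 < D.L := by have := D.hL; omega
  have hr : m / D.L < D.K := by rw [Nat.div_lt_iff_lt_mul hL0]; exact hm
  obtain ⟨h1, h2⟩ := D.coords_eq hio m hm
  exact D.pos_unique hm hr (Nat.mod_lt m hL0) h1 h2

theorem vlt_iff (hio : D.pos 0 (D.L - 1) < D.pos (D.K - 1) 0)
    {m m' : ℕ} (hm : m < D.n) (hm' : m' < D.n) :
    (D.v m < D.v m' ↔ D.g m < D.g m') := by
  have hK := D.hK; have hL := D.hL
  have hL0 : 0 < D.L := by omega
  have hrm : m / D.L < D.K := by rw [Nat.div_lt_iff_lt_mul hL0]; exact hm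
  have hrm' : m' / D.L < D.K := by rw [Nat.div_lt_iff_lt_mul hL0]; exact hm'
  have hcm : m % D.L < D.L := Nat.mod_lt m hL0
  have hcm' : m' % D.L < D.L := Nat.mod_lt m' hL0
  obtain ⟨r, hrdef⟩ : ∃ r, r = m / D.L := ⟨_, rfl⟩
  obtain ⟨c, hcdef⟩ : ∃ c, c = m % D.L := ⟨_, rfl⟩
  obtain ⟨r', hrdef'⟩ : ∃ r', r' = m' / D.L := ⟨_, rfl⟩
  obtain ⟨c', hcdef'⟩ : ∃ c', c' = m' % D.L := ⟨_, rfl⟩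
  have hpm : D.pos r c = m := by rw [hrdef, hcdef]; exact D.pos_of_self hio hm
  have hpm' : D.pos r' c' = m' := by rw [hrdef', hcdef']; exact D.pos_of_self hio hm'
  rw [← hrdef] at hrm
  rw [← hcdef] at hcm
  rw [← hrdef'] at hrm'
  rw [← hcdef'] at hcm'
  -- characterize v order
  have hvord : D.v m < D.v m' ↔ (c' < c ∨ (c = c' ∧ r < r')) := by
    constructor
    · intro hv
      rcases lt_trichotomy c c' with hc | hc | hc
      · exfalso
        rcases lt_trichotomy r r' with hr | hr | hr
        · have := D.relC hio hr hrm' hc hcm'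
          rw [hpm, hpm'] at this; omega
        · subst hr
          have := D.v_pos_gt_c hc hrm hcm'
          rw [hpm, hpm'] at this; omega
        · have := D.relB hio hr hrm (le_of_lt hc) hcm'
          rw [hpm, hpm'] at this; omega
      · subst hc
        rcases lt_trichotomy r r' with hr | hr | hr
        · exact Or.inr ⟨rfl, hr⟩
        · exfalso; subst hr
          rw [← hpm, ← hpm'] at hv; exact lt_irrefl _ hv
        · exfalso
          have := D.v_pos_lt_r hr hrm hcm
          rw [hpm, hpm'] at this; omega
      · exact Or.inl hc
    · intro hc
      rcases hc with hc | ⟨hc, hr⟩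
      · rcases lt_trichotomy r r' with hr | hr | hr
        · have := D.relB hio hr hrm' (le_of_lt hc) hcm
          rw [hpm, hpm'] at this; omega
        · subst hr
          have := D.v_pos_gt_c hc hrm' hcm
          rw [hpm, hpm'] at this; omega
        · have := D.relC hio hr hrm hc hcm
          rw [hpm, hpm'] at this; omega
      · subst hc
        have := D.v_pos_lt_r hr hrm' hcm
        rw [hpm, hpm'] at this; omega
  -- characterize g order
  have hgord : D.g m < D.g m' ↔ (c' < c ∨ (c = c' ∧ r < r')) := by
    rw [g, g, ← hrdef, ← hcdef, ← hrdef', ← hcdef']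
    constructor
    · intro hg
      rcases lt_trichotomy c c' with hc | hc | hc
      · exfalso
        have hb : (D.L - 1 - c') + 1 ≤ D.L - 1 - c := by omega
        have := Nat.mul_le_mul_right D.K hb
        have hd : (D.L - 1 - c' + 1) * D.K = (D.L - 1 - c') * D.K + D.K := by ring
        omega
      · subst hc; omega
      · exact Or.inl hc
    · intro hc
      rcases hc with hc | ⟨hc, hr⟩
      · have hb : (D.L - 1 - c) + 1 ≤ D.L - 1 - c' := by omega
        have := Nat.mul_le_mul_right D.K hb
        have hd : (D.L - 1 - c + 1) * D.K = (D.L - 1 - c) * D.K + D.K := by ring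
        omega
      · subst hc; omega
  rw [hvord, hgord]

theorem g_lt {m : ℕ} (hm : m < D.n) : D.g m < D.n := by
  have hK := D.hK; have hL := D.hL
  have hL0 : 0 < D.L := by omega
  have hrm : m / D.L < D.K := by rw [Nat.div_lt_iff_lt_mul hL0]; exact hm
  have hcm : m % D.L < D.L := Nat.mod_lt m hL0
  have hb : (D.L - 1 - m % D.L) ≤ D.L - 1 := by omega
  have h2 : (D.L - 1 - m % D.L) * D.K ≤ (D.L - 1) * D.K := Nat.mul_le_mul_right D.K hb
  have h3 : (D.L - 1) * D.K + D.K = D.L * D.K := by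
    have : D.L - 1 + 1 = D.L := by omega
    calc (D.L - 1) * D.K + D.K = (D.L - 1 + 1) * D.K := by ring
    _ = D.L * D.K := by rw [this]
  have hn : D.n = D.K * D.L := rfl
  have h4 : D.L * D.K = D.K * D.L := Nat.mul_comm _ _
  rw [g]
  omega

theorem count_lemma (f : ℕ → ℕ) (hbd : ∀ i, i < D.n → f i < D.n)
    (hinjf : ∀ i, i < D.n → ∀ j, j < D.n → f i = f j → i = j) {m : ℕ} (hm : m < D.n) :
    ((Finset.range D.n).filter (fun x => f x < f m)).card = f m := by
  have himg : ((Finset.range D.n).filter (fun x => f x < f m)).image f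
      = Finset.range (f m) := by
    apply Finset.Subset.antisymm
    · intro y hy
      simp only [Finset.mem_image, Finset.mem_filter, Finset.mem_range] at hy ⊢
      obtain ⟨x, ⟨hx1, hx2⟩, hx3⟩ := hy
      omega
    · intro y hy
      simp only [Finset.mem_range] at hy
      have hyn : y < D.n := lt_trans hy (hbd m hm)
      -- surjectivity
      have hsurj : ∃ x, x < D.n ∧ f x = y := by
        have himg2 : (Finset.range D.n).image f = Finset.range D.n := by
          apply Finset.eq_of_subset_of_card_le
          · intro z hz
            simp only [Finset.mem_image, Finset.mem_range] at hz ⊢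
            obtain ⟨x, hx, hfx⟩ := hz
            exact hfx ▸ hbd x hx
          · rw [Finset.card_image_of_injOn, Finset.card_range]
            intro i hi j hj hij
            exact hinjf i (Finset.mem_range.1 hi) j (Finset.mem_range.1 hj) hij
        have : y ∈ (Finset.range D.n).image f := himg2.symm ▸ Finset.mem_range.2 hyn
        simp only [Finset.mem_image, Finset.mem_range] at this
        exact this
      obtain ⟨x, hx, hfx⟩ := hsurj
      simp only [Finset.mem_image, Finset.mem_filter, Finset.mem_range]
      exact ⟨x, ⟨hx, by omega⟩, hfx⟩
  have hcard : ((Finset.range D.n).filter (fun x => f x < f m)).card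
      = (((Finset.range D.n).filter (fun x => f x < f m)).image f).card := by
    rw [Finset.card_image_of_injOn]
    intro i hi j hj hij
    simp only [Finset.mem_coe, Finset.mem_filter, Finset.mem_range] at hi hj
    exact hinjf i hi.1 j hj.1 hij
  rw [hcard, himg, Finset.card_range]


theorem g_inj : ∀ i, i < D.n → ∀ j, j < D.n → D.g i = D.g j → i = j := by
  have hK := D.hK; have hL := D.hL
  have hL0 : 0 < D.L := by omega
  have hK0 : 0 < D.K := by omega
  intro i hi j hj hij
  have hdm : ∀ x, x < D.n → D.g x % D.K = x / D.L ∧ D.g x / D.K = D.L - 1 - x % D.L := by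
    intro x hx
    have hrx : x / D.L < D.K := by rw [Nat.div_lt_iff_lt_mul hL0]; exact hx
    constructor
    · rw [g, Nat.mul_comm (D.L - 1 - x % D.L) D.K, Nat.mul_add_mod, Nat.mod_eq_of_lt hrx]
    · rw [g, show (D.L - 1 - x % D.L) * D.K + x / D.L = x / D.L + (D.L - 1 - x % D.L) * D.K
        by omega, Nat.add_mul_div_right _ _ hK0, Nat.div_eq_of_lt hrx]
      omega
  obtain ⟨h1i, h2i⟩ := hdm i hi
  obtain ⟨h1j, h2j⟩ := hdm j hj
  have hdi : i / D.L = j / D.L := by rw [← h1i, ← h1j, hij]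
  have hci : i % D.L < D.L := Nat.mod_lt i hL0
  have hcj : j % D.L < D.L := Nat.mod_lt j hL0
  have hmi : i % D.L = j % D.L := by
    rw [hij] at h2i
    omega
  have d1 := Nat.div_add_mod i D.L
  have d2 := Nat.div_add_mod j D.L
  have hmul : D.L * (i / D.L) = D.L * (j / D.L) := by rw [hdi]
  omega

theorem v_eq_g (hio : D.pos 0 (D.L - 1) < D.pos (D.K - 1) 0) :
    ∀ m, m < D.n → D.v m = D.g m := by
  intro m hm
  have h1 := D.count_lemma D.v D.hlt D.hinj hm
  have h2 := D.count_lemma D.g (fun i hi => D.g_lt hi) D.g_inj hm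
  have hset : (Finset.range D.n).filter (fun x => D.v x < D.v m)
      = (Finset.range D.n).filter (fun x => D.g x < D.g m) := by
    apply Finset.filter_congr
    intro x hx
    rw [Finset.mem_range] at hx
    exact D.vlt_iff hio hx hm
  rw [hset] at h1
  omega

end Values

theorem pos_of_zero {i0 : ℕ} (h0 : i0 < D.n) (hv0 : D.v i0 = 0) :
    D.pos 0 (D.L - 1) = i0 := by
  have hK := D.hK; have hL := D.hL
  obtain ⟨hR, hC⟩ := D.v_zero_coords h0 hv0
  exact D.pos_unique h0 (by omega) (by omega) (by omega) (by omega)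

theorem pos_of_max {i1 : ℕ} (h1 : i1 < D.n) (hv1 : D.v i1 = D.n - 1) :
    D.pos (D.K - 1) 0 = i1 := by
  have hK := D.hK; have hL := D.hL
  obtain ⟨hC, hR⟩ := D.v_max_coords h1 hv1
  exact D.pos_unique h1 (by omega) (by omega) (by omega) (by omega)

/-- If the maximum value comes before the minimum, then `v 0 < v (n-1)`. -/
theorem key {i0 i1 : ℕ} (h0 : i0 < D.n) (h1 : i1 < D.n) (hv0 : D.v i0 = 0)
    (hv1 : D.v i1 = D.n - 1) (h : i1 < i0) : D.v 0 < D.v (D.n - 1) := by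
  have hK := D.hK; have hL := D.hL
  have hp0 := D.pos_of_zero h0 hv0
  have hp1 := D.pos_of_max h1 hv1
  have hz : D.pos 0 0 = 0 := by
    obtain ⟨hR, hC⟩ := D.index_zero_coords
    exact D.pos_unique D.n_pos (by omega) (by omega) (by omega) (by omega)
  have hlast : D.pos (D.K - 1) (D.L - 1) = D.n - 1 := by
    obtain ⟨hR, hC⟩ := D.index_last_coords
    exact D.pos_unique (by have := D.n_pos; omega) (by omega) (by omega) (by omega) (by omega)
  have hKm1 : D.K - 1 < D.K := by omega
  have hLm1 : D.L - 1 < D.L := by omega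
  have hne : (0:ℕ) ≠ D.n - 1 := by
    have h1 : (1:ℕ) ≤ D.K - 1 := by omega
    have := D.n_pos
    have hnn : D.n = D.K * D.L := rfl
    have : 2 * 2 ≤ D.K * D.L := Nat.mul_le_mul hK hL
    omega
  rcases lt_or_gt_of_ne (D.v_ne D.n_pos (by have := D.n_pos; omega) hne) with hv | hv
  · exact hv
  exfalso
  have hcfg := D.inc_config (D.colChain_inc hKm1 (show (0:ℕ) < D.L by omega))
    (D.colChain_inc hKm1 hLm1)
    (l₁ := D.colChain 0 (D.K - 1) 0) (l₂ := D.colChain 0 (D.K - 1) (D.L - 1)) ?_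
  · rw [D.colChain_length, D.colChain_length] at hcfg
    omega
  · intro p hp q hq
    obtain ⟨t, ht1, ht2, hteq⟩ := D.colChain_mem hp
    obtain ⟨s, hs1, hs2, hseq⟩ := D.colChain_mem hq
    subst hteq hseq
    constructor
    · calc D.pos t 0 ≤ D.pos (D.K - 1) 0 := D.pos_le_pos_r ht2 hKm1 (by omega)
      _ = i1 := hp1
      _ < i0 := h
      _ = D.pos 0 (D.L - 1) := hp0.symm
      _ ≤ D.pos s (D.L - 1) := D.pos_le_pos_r (Nat.zero_le s) (by omega) hLm1
    · calc D.v (D.pos s (D.L - 1)) ≤ D.v (D.pos (D.K - 1) (D.L - 1)) :=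
        D.v_pos_le_r hs2 hKm1 hLm1
      _ < D.v (D.pos 0 0) := by rw [hz, hlast]; exact hv
      _ ≤ D.v (D.pos t 0) := D.v_pos_le_r (Nat.zero_le t) (by omega) (by omega)

/-- Core theorem: if value 0 comes before value n-1, the permutation is the
canonical extremal one. -/
theorem core (hcase : ∀ i0 i1, i0 < D.n → i1 < D.n → D.v i0 = 0 → D.v i1 = D.n - 1 → i0 < i1) :
    ∀ m, m < D.n → D.v m = (D.L - 1 - m % D.L) * D.K + m / D.L := by
  have hK := D.hK; have hL := D.hL
  obtain ⟨i0, h0, hv0⟩ := D.v_surj D.n_pos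
  obtain ⟨i1, h1, hv1⟩ := D.v_surj (show D.n - 1 < D.n by have := D.n_pos; omega)
  have hio : D.pos 0 (D.L - 1) < D.pos (D.K - 1) 0 := by
    rw [D.pos_of_zero h0 hv0, D.pos_of_max h1 hv1]
    exact hcase i0 i1 h0 h1 hv0 hv1
  intro m hm
  exact D.v_eq_g hio m hm

open Classical in
noncomputable def vinv (x : ℕ) : ℕ :=
  if h : ∃ i, i < D.n ∧ D.v i = x then h.choose else 0

open Classical in
theorem vinv_spec {x : ℕ} (hx : x < D.n) : D.vinv x < D.n ∧ D.v (D.vinv x) = x := by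
  rw [vinv]
  have hex : ∃ i, i < D.n ∧ D.v i = x := D.v_surj hx
  rw [dif_pos hex]
  exact hex.choose_spec

theorem vinv_v {i : ℕ} (hi : i < D.n) : D.vinv (D.v i) = i := by
  have h1 := D.vinv_spec (D.hlt i hi)
  exact D.hinj _ h1.1 i hi h1.2

/-- The inverse permutation satisfies the same hypotheses. -/
noncomputable def swap : ESData where
  K := D.K
  L := D.L
  hK := D.hK
  hL := D.hL
  v := D.vinv
  hlt := fun i hi => (D.vinv_spec hi).1
  hinj := fun i hi j hj h => by
    have h1 := (D.vinv_spec hi).2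
    have h2 := (D.vinv_spec hj).2
    rw [← h1, ← h2, h]
  H1 := fun l hp hmem => by
    have : (l.map D.vinv).length ≤ D.K := by
      apply D.H1
      · rw [List.pairwise_map]
        apply List.Pairwise.imp_of_mem (R := fun i j => i < j ∧ D.vinv i < D.vinv j) ?_ hp
        intro a b ha hb hab
        refine ⟨hab.2, ?_⟩
        rw [(D.vinv_spec (hmem a ha)).2, (D.vinv_spec (hmem b hb)).2]
        exact hab.1
      · intro i hi
        obtain ⟨x, hx, hxeq⟩ := List.mem_map.1 hi
        exact hxeq ▸ (D.vinv_spec (hmem x hx)).1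
    simpa using this
  H2 := fun l hp hmem => by
    have : ((l.map D.vinv).reverse).length ≤ D.L := by
      apply D.H2
      · rw [List.pairwise_reverse, List.pairwise_map]
        apply List.Pairwise.imp_of_mem (R := fun i j => i < j ∧ D.vinv j < D.vinv i) ?_ hp
        intro a b ha hb hab
        refine ⟨hab.2, ?_⟩
        rw [(D.vinv_spec (hmem a ha)).2, (D.vinv_spec (hmem b hb)).2]
        exact hab.1
      · intro i hi
        rw [List.mem_reverse] at hi
        obtain ⟨x, hx, hxeq⟩ := List.mem_map.1 hi
        exact hxeq ▸ (D.vinv_spec (hmem x hx)).1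
    simpa using this
  H3 := fun l₁ l₂ hp1 hm1 hp2 hm2 hcross => by
    have : (l₂.map D.vinv).length + (l₁.map D.vinv).length ≤ D.K + 1 := by
      apply D.H3
      · rw [List.pairwise_map]
        apply List.Pairwise.imp_of_mem (R := fun i j => i < j ∧ D.vinv i < D.vinv j) ?_ hp2
        intro a b ha hb hab
        refine ⟨hab.2, ?_⟩
        rw [(D.vinv_spec (hm2 a ha)).2, (D.vinv_spec (hm2 b hb)).2]
        exact hab.1
      · intro i hi
        obtain ⟨x, hx, hxeq⟩ := List.mem_map.1 hi
        exact hxeq ▸ (D.vinv_spec (hm2 x hx)).1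
      · rw [List.pairwise_map]
        apply List.Pairwise.imp_of_mem (R := fun i j => i < j ∧ D.vinv i < D.vinv j) ?_ hp1
        intro a b ha hb hab
        refine ⟨hab.2, ?_⟩
        rw [(D.vinv_spec (hm1 a ha)).2, (D.vinv_spec (hm1 b hb)).2]
        exact hab.1
      · intro i hi
        obtain ⟨x, hx, hxeq⟩ := List.mem_map.1 hi
        exact hxeq ▸ (D.vinv_spec (hm1 x hx)).1
      · intro p hp q hq
        obtain ⟨x, hx, hxeq⟩ := List.mem_map.1 hp
        obtain ⟨y, hy, hyeq⟩ := List.mem_map.1 hq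
        subst hxeq hyeq
        have hc := hcross y hy x hx
        refine ⟨hc.2, ?_⟩
        rw [(D.vinv_spec (hm1 y hy)).2, (D.vinv_spec (hm2 x hx)).2]
        exact hc.1
    simp only [List.length_map] at this
    omega
  H4 := fun l₁ l₂ hp1 hm1 hp2 hm2 hcross => by
    have : ((l₁.map D.vinv).reverse).length + ((l₂.map D.vinv).reverse).length ≤ D.L + 1 := by
      apply D.H4
      · rw [List.pairwise_reverse, List.pairwise_map]
        apply List.Pairwise.imp_of_mem (R := fun i j => i < j ∧ D.vinv j < D.vinv i) ?_ hp1
        intro a b ha hb hab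
        refine ⟨hab.2, ?_⟩
        rw [(D.vinv_spec (hm1 a ha)).2, (D.vinv_spec (hm1 b hb)).2]
        exact hab.1
      · intro i hi
        rw [List.mem_reverse] at hi
        obtain ⟨x, hx, hxeq⟩ := List.mem_map.1 hi
        exact hxeq ▸ (D.vinv_spec (hm1 x hx)).1
      · rw [List.pairwise_reverse, List.pairwise_map]
        apply List.Pairwise.imp_of_mem (R := fun i j => i < j ∧ D.vinv j < D.vinv i) ?_ hp2
        intro a b ha hb hab
        refine ⟨hab.2, ?_⟩
        rw [(D.vinv_spec (hm2 a ha)).2, (D.vinv_spec (hm2 b hb)).2]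
        exact hab.1
      · intro i hi
        rw [List.mem_reverse] at hi
        obtain ⟨x, hx, hxeq⟩ := List.mem_map.1 hi
        exact hxeq ▸ (D.vinv_spec (hm2 x hx)).1
      · intro p hp q hq
        rw [List.mem_reverse] at hp hq
        obtain ⟨x, hx, hxeq⟩ := List.mem_map.1 hp
        obtain ⟨y, hy, hyeq⟩ := List.mem_map.1 hq
        subst hxeq hyeq
        have hc := hcross x hx y hy
        refine ⟨hc.2, ?_⟩
        rw [(D.vinv_spec (hm1 x hx)).2, (D.vinv_spec (hm2 y hy)).2]
        exact hc.1
    simp only [List.length_reverse, List.length_map] at this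
    omega

theorem swap_n : D.swap.n = D.n := rfl

theorem swap_v : D.swap.v = D.vinv := rfl

end ESData


/-- Mapping `getD` over a sorted list of indices (all `≥ t`) gives a sublist of `a.drop t`. -/
theorem map_getD_sublist_drop (a : List ℕ) :
    ∀ (is : List ℕ) (t : ℕ), is.Pairwise (· < ·) → (∀ i ∈ is, t ≤ i ∧ i < a.length) →
      (is.map (fun i => a.getD i 0)).Sublist (a.drop t) := by
  intro is
  induction is with
  | nil => intro t _ _; simp
  | cons i rest IH =>
    intro t hp hmem
    have hi := hmem i (List.mem_cons_self)
    have hdropi : a.drop i = a[i]'hi.2 :: a.drop (i+1) := List.drop_eq_getElem_cons hi.2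
    have hgd : a.getD i 0 = a[i]'hi.2 := List.getD_eq_getElem a 0 hi.2
    have hrest : (rest.map (fun i => a.getD i 0)).Sublist (a.drop (i+1)) := by
      apply IH (i+1) (List.Pairwise.of_cons hp)
      intro j hj
      have h1 := List.rel_of_pairwise_cons hp hj
      exact ⟨by omega, (hmem j (List.mem_cons_of_mem _ hj)).2⟩
    have hstep : ((i :: rest).map (fun i => a.getD i 0)).Sublist (a.drop i) := by
      rw [List.map_cons, hgd, hdropi]
      exact List.Sublist.cons₂ _ hrest
    have hdt : a.drop i = (a.drop t).drop (i - t) := by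
      rw [List.drop_drop, show t + (i - t) = i by omega]
    exact hstep.trans (by rw [hdt]; exact List.drop_sublist _ _)

theorem take_getD_eq {a : List ℕ} {t i : ℕ} (h1 : i < t) (h2 : i < a.length) :
    (a.take t).getD i 0 = a.getD i 0 := by
  have hlt : i < (a.take t).length := by
    rw [List.length_take]; omega
  rw [List.getD_eq_getElem _ 0 hlt, List.getD_eq_getElem a 0 h2]
  exact List.getElem_take

theorem extremal_characterization (k ℓ : ℕ) (hk : 3 ≤ k) (hl : 3 ≤ ℓ) (a : List ℕ)
    (hperm : a.Perm (List.range' 1 ((k-1)*(ℓ-1))))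
    (hinc : ¬ ∃ s : List ℕ, s.Sublist a ∧ s.length = k ∧ s.Pairwise (· < ·))
    (hdec : ¬ ∃ s : List ℕ, s.Sublist a ∧ s.length = ℓ ∧ s.Pairwise (· > ·))
    (hcinc : ¬ IncCycSub a (k+1)) (hcdec : ¬ DecCycSub a (ℓ+1)) :
    (∀ i ∈ Finset.Icc 1 (ℓ-1), ∀ j ∈ Finset.Icc 1 (k-1),
      a.getD ((j-1)*(ℓ-1)+i-1) 0 = (ℓ-1-i)*(k-1)+j) ∨
    (∀ i ∈ Finset.Icc 1 (ℓ-1), ∀ j ∈ Finset.Icc 1 (k-1),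
      a.getD ((i-1)*(k-1)+j-1) 0 = (j-1)*(ℓ-1)+(ℓ-i)) := by
  have hlen : a.length = (k-1)*(ℓ-1) := by
    rw [hperm.length_eq]; simp
  have hn4 : 4 ≤ (k-1)*(ℓ-1) := by
    calc 4 = 2 * 2 := rfl
    _ ≤ (k-1)*(ℓ-1) := Nat.mul_le_mul (by omega) (by omega)
  have hmem1 : ∀ i, i < (k-1)*(ℓ-1) → 1 ≤ a.getD i 0 ∧ a.getD i 0 < (k-1)*(ℓ-1)+1 := by
    intro i hi
    have hia : i < a.length := by omega
    have hmm : a.getD i 0 ∈ a := by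
      rw [List.getD_eq_getElem a 0 hia]; exact List.getElem_mem hia
    have := (hperm.mem_iff).1 hmm
    rw [List.mem_range'_1] at this
    omega
  have hnodup : a.Nodup := by
    rw [hperm.nodup_iff]
    exact List.nodup_range' (s := 1) (n := (k-1)*(ℓ-1)) (step := 1) (by omega)
  have hgetD_inj : ∀ i, i < (k-1)*(ℓ-1) → ∀ j, j < (k-1)*(ℓ-1) →
      a.getD i 0 = a.getD j 0 → i = j := by
    intro i hi j hj hij
    have hia : i < a.length := by omega
    have hja : j < a.length := by omega
    rw [List.getD_eq_getElem a 0 hia, List.getD_eq_getElem a 0 hja] at hij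
    exact hnodup.getElem_inj_iff.mp hij
  -- the 0-based value function
  obtain ⟨v, hvdef⟩ : ∃ v : ℕ → ℕ, v = fun i => a.getD i 0 - 1 := ⟨_, rfl⟩
  have hv1 : ∀ i, i < (k-1)*(ℓ-1) → a.getD i 0 = v i + 1 := by
    intro i hi
    have := hmem1 i hi
    simp only [hvdef]
    omega
  have hvlt : ∀ i, i < (k-1)*(ℓ-1) → v i < (k-1)*(ℓ-1) := by
    intro i hi
    have h1 := hmem1 i hi
    have h2 := hv1 i hi
    omega
  have hvinj : ∀ i, i < (k-1)*(ℓ-1) → ∀ j, j < (k-1)*(ℓ-1) → v i = v j → i = j := by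
    intro i hi j hj hij
    apply hgetD_inj i hi j hj
    rw [hv1 i hi, hv1 j hj, hij]
  have hvord : ∀ i j, i < (k-1)*(ℓ-1) → j < (k-1)*(ℓ-1) →
      (v i < v j ↔ a.getD i 0 < a.getD j 0) := by
    intro i j hi hj
    have h1 := hv1 i hi
    have h2 := hv1 j hj
    omega
  -- chain bounds
  have hbound1 : ∀ l : List ℕ, (l.Pairwise fun i j => i < j ∧ v i < v j) →
      (∀ i ∈ l, i < (k-1)*(ℓ-1)) → l.length ≤ k-1 := by
    intro l hp hmemb
    by_contra hcon
    push_neg at hcon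
    apply hinc
    refine ⟨(l.take k).map (fun i => a.getD i 0), ?_, ?_, ?_⟩
    · have := map_getD_sublist_drop a (l.take k) 0
        ((hp.imp fun h => h.1).sublist (List.take_sublist _ _))
        (fun i hi => ⟨Nat.zero_le _, by
          have := hmemb i ((List.take_sublist _ _).mem hi); omega⟩)
      simpa using this
    · rw [List.length_map, List.length_take]; omega
    · show ((l.take k).map (fun i => a.getD i 0)).Pairwise (· < ·)
      rw [List.pairwise_map]
      apply List.Pairwise.imp_of_mem (R := fun i j => i < j ∧ v i < v j) ?_
        (hp.sublist (List.take_sublist _ _))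
      intro b c hb hc hbc
      have hbn := hmemb b ((List.take_sublist _ _).mem hb)
      have hcn := hmemb c ((List.take_sublist _ _).mem hc)
      exact (hvord b c hbn hcn).1 hbc.2
  have hbound2 : ∀ l : List ℕ, (l.Pairwise fun i j => i < j ∧ v j < v i) →
      (∀ i ∈ l, i < (k-1)*(ℓ-1)) → l.length ≤ ℓ-1 := by
    intro l hp hmemb
    by_contra hcon
    push_neg at hcon
    apply hdec
    refine ⟨(l.take ℓ).map (fun i => a.getD i 0), ?_, ?_, ?_⟩
    · have := map_getD_sublist_drop a (l.take ℓ) 0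
        ((hp.imp fun h => h.1).sublist (List.take_sublist _ _))
        (fun i hi => ⟨Nat.zero_le _, by
          have := hmemb i ((List.take_sublist _ _).mem hi); omega⟩)
      simpa using this
    · rw [List.length_map, List.length_take]; omega
    · show ((l.take ℓ).map (fun i => a.getD i 0)).Pairwise (· > ·)
      rw [List.pairwise_map]
      apply List.Pairwise.imp_of_mem (R := fun i j => i < j ∧ v j < v i) ?_
        (hp.sublist (List.take_sublist _ _))
      intro b c hb hc hbc
      have hbn := hmemb b ((List.take_sublist _ _).mem hb)
      have hcn := hmemb c ((List.take_sublist _ _).mem hc)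
      exact (hvord c b hcn hbn).1 hbc.2
  -- cyclic configuration bounds
  have hcyc1 : ∀ l₁ l₂ : List ℕ, (l₁.Pairwise fun i j => i < j ∧ v i < v j) →
      (∀ i ∈ l₁, i < (k-1)*(ℓ-1)) →
      (l₂.Pairwise fun i j => i < j ∧ v i < v j) → (∀ i ∈ l₂, i < (k-1)*(ℓ-1)) →
      (∀ i ∈ l₁, ∀ j ∈ l₂, i < j ∧ v j < v i) → l₁.length + l₂.length ≤ (k-1) + 1 := by
    intro l₁ l₂ hp1 hm1 hp2 hm2 hcross
    by_contra hcon
    push_neg at hcon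
    match l₂ with
    | [] =>
      have := hbound1 l₁ hp1 hm1
      simp at hcon
      omega
    | j :: rest =>
      apply hcinc
      refine ⟨j, (((j :: rest).map (fun i => a.getD i 0)) ++
        (l₁.map (fun i => a.getD i 0))).take (k+1), ?_, ?_, ?_⟩
      · apply (List.take_sublist _ _).trans
        have hja : j < a.length := by have := hm2 j (List.mem_cons_self); omega
        rw [List.rotate_eq_drop_append_take (le_of_lt hja)]
        apply List.Sublist.append
        · apply map_getD_sublist_drop a _ j (hp2.imp fun h => h.1)
          intro i hi
          rcases List.mem_cons.1 hi with h | h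
          · subst h; exact ⟨le_refl _, hja⟩
          · have h2 := List.rel_of_pairwise_cons hp2 h
            have := hm2 i hi
            exact ⟨by omega, by omega⟩
        · have hmapeq : l₁.map (fun i => a.getD i 0)
              = l₁.map (fun i => (a.take j).getD i 0) := by
            apply List.map_congr_left
            intro x hx
            have hxj := (hcross x hx j (List.mem_cons_self)).1
            have hxa : x < a.length := by have := hm1 x hx; omega
            exact (take_getD_eq hxj hxa).symm
          rw [hmapeq]
          have := map_getD_sublist_drop (a.take j) l₁ 0 (hp1.imp fun h => h.1)
            (fun i hi => ⟨Nat.zero_le _, by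
              rw [List.length_take]
              have := (hcross i hi j (List.mem_cons_self)).1
              have := hm1 i hi
              omega⟩)
          simpa using this
      · rw [List.length_take, List.length_append, List.length_map, List.length_map]
        simp only [List.length_cons]
        simp only [List.length_cons] at hcon
        omega
      · show (_ : List ℕ).Pairwise (· < ·)
        apply List.Pairwise.sublist (List.take_sublist _ _)
        rw [List.pairwise_append]
        refine ⟨?_, ?_, ?_⟩
        · rw [List.pairwise_map]
          apply List.Pairwise.imp_of_mem (R := fun i j => i < j ∧ v i < v j) ?_ hp2
          intro b c hb hc hbc
          exact (hvord b c (hm2 b hb) (hm2 c hc)).1 hbc.2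
        · rw [List.pairwise_map]
          apply List.Pairwise.imp_of_mem (R := fun i j => i < j ∧ v i < v j) ?_ hp1
          intro b c hb hc hbc
          exact (hvord b c (hm1 b hb) (hm1 c hc)).1 hbc.2
        · intro x hx y hy
          obtain ⟨b, hb, hbeq⟩ := List.mem_map.1 hx
          obtain ⟨c, hc, hceq⟩ := List.mem_map.1 hy
          subst hbeq hceq
          exact (hvord b c (hm2 b hb) (hm1 c hc)).1 (hcross c hc b hb).2
  have hcyc2 : ∀ l₁ l₂ : List ℕ, (l₁.Pairwise fun i j => i < j ∧ v j < v i) →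
      (∀ i ∈ l₁, i < (k-1)*(ℓ-1)) →
      (l₂.Pairwise fun i j => i < j ∧ v j < v i) → (∀ i ∈ l₂, i < (k-1)*(ℓ-1)) →
      (∀ i ∈ l₁, ∀ j ∈ l₂, i < j ∧ v i < v j) → l₁.length + l₂.length ≤ (ℓ-1) + 1 := by
    intro l₁ l₂ hp1 hm1 hp2 hm2 hcross
    by_contra hcon
    push_neg at hcon
    match l₂ with
    | [] =>
      have := hbound2 l₁ hp1 hm1
      simp at hcon
      omega
    | j :: rest =>
      apply hcdec
      refine ⟨j, (((j :: rest).map (fun i => a.getD i 0)) ++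
        (l₁.map (fun i => a.getD i 0))).take (ℓ+1), ?_, ?_, ?_⟩
      · apply (List.take_sublist _ _).trans
        have hja : j < a.length := by have := hm2 j (List.mem_cons_self); omega
        rw [List.rotate_eq_drop_append_take (le_of_lt hja)]
        apply List.Sublist.append
        · apply map_getD_sublist_drop a _ j (hp2.imp fun h => h.1)
          intro i hi
          rcases List.mem_cons.1 hi with h | h
          · subst h; exact ⟨le_refl _, hja⟩
          · have h2 := List.rel_of_pairwise_cons hp2 h
            have := hm2 i hi
            exact ⟨by omega, by omega⟩
        · have hmapeq : l₁.map (fun i => a.getD i 0)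
              = l₁.map (fun i => (a.take j).getD i 0) := by
            apply List.map_congr_left
            intro x hx
            have hxj := (hcross x hx j (List.mem_cons_self)).1
            have hxa : x < a.length := by have := hm1 x hx; omega
            exact (take_getD_eq hxj hxa).symm
          rw [hmapeq]
          have := map_getD_sublist_drop (a.take j) l₁ 0 (hp1.imp fun h => h.1)
            (fun i hi => ⟨Nat.zero_le _, by
              rw [List.length_take]
              have := (hcross i hi j (List.mem_cons_self)).1
              have := hm1 i hi
              omega⟩)
          simpa using this
      · rw [List.length_take, List.length_append, List.length_map, List.length_map]
        simp only [List.length_cons]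
        simp only [List.length_cons] at hcon
        omega
      · show (_ : List ℕ).Pairwise (· > ·)
        apply List.Pairwise.sublist (List.take_sublist _ _)
        rw [List.pairwise_append]
        refine ⟨?_, ?_, ?_⟩
        · rw [List.pairwise_map]
          apply List.Pairwise.imp_of_mem (R := fun i j => i < j ∧ v j < v i) ?_ hp2
          intro b c hb hc hbc
          exact (hvord c b (hm2 c hc) (hm2 b hb)).1 hbc.2
        · rw [List.pairwise_map]
          apply List.Pairwise.imp_of_mem (R := fun i j => i < j ∧ v j < v i) ?_ hp1
          intro b c hb hc hbc
          exact (hvord c b (hm1 c hc) (hm1 b hb)).1 hbc.2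
        · intro x hx y hy
          obtain ⟨b, hb, hbeq⟩ := List.mem_map.1 hx
          obtain ⟨c, hc, hceq⟩ := List.mem_map.1 hy
          subst hbeq hceq
          exact (hvord c b (hm1 c hc) (hm2 b hb)).1 (hcross c hc b hb).2
  -- build the data
  have hKlem : 2 ≤ k - 1 := by omega
  have hLlem : 2 ≤ ℓ - 1 := by omega
  let D : ESData :=
    ⟨k-1, ℓ-1, hKlem, hLlem, v, hvlt, hvinj, hbound1, hbound2, hcyc1, hcyc2⟩
  -- positions of values 0 and n-1
  have h1mem : (1:ℕ) ∈ a := hperm.mem_iff.2 (by rw [List.mem_range'_1]; omega)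
  have hnmem : ((k-1)*(ℓ-1) : ℕ) ∈ a := hperm.mem_iff.2 (by rw [List.mem_range'_1]; omega)
  obtain ⟨i0, hi0lt, hi0⟩ := List.getElem_of_mem h1mem
  obtain ⟨i1, hi1lt, hi1⟩ := List.getElem_of_mem hnmem
  have hi0n : i0 < (k-1)*(ℓ-1) := by omega
  have hi1n : i1 < (k-1)*(ℓ-1) := by omega
  have hv0 : v i0 = 0 := by
    have h1 : a.getD i0 0 = 1 := by rw [List.getD_eq_getElem a 0 hi0lt]; exact hi0
    have h2 := hv1 i0 hi0n
    omega
  have hvmax : v i1 = (k-1)*(ℓ-1) - 1 := by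
    have h1 : a.getD i1 0 = (k-1)*(ℓ-1) := by rw [List.getD_eq_getElem a 0 hi1lt]; exact hi1
    have h2 := hv1 i1 hi1n
    omega
  have hne01 : i0 ≠ i1 := by
    intro h
    rw [h] at hv0
    omega
  have hdm : ∀ r c : ℕ, c < ℓ-1 → ((r*(ℓ-1)+c) / (ℓ-1) = r ∧ (r*(ℓ-1)+c) % (ℓ-1) = c) := by
    intro r c hc
    have hL0 : 0 < ℓ-1 := by omega
    constructor
    · rw [show r * (ℓ-1) + c = c + r * (ℓ-1) by omega, Nat.add_mul_div_right c r hL0,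
        Nat.div_eq_of_lt hc]
      omega
    · rw [show r * (ℓ-1) + c = c + r * (ℓ-1) by omega, Nat.add_mul_mod_self_right,
        Nat.mod_eq_of_lt hc]
  rcases lt_or_gt_of_ne hne01 with hcase | hcase
  · -- case 1 : value 1 before value n : first pattern
    left
    have hcore := D.core (fun j0 j1 h0 h1 hw0 hw1 => by
      have h0' : j0 < (k-1)*(ℓ-1) := h0
      have h1' : j1 < (k-1)*(ℓ-1) := h1
      have hw0' : v j0 = 0 := hw0
      have hw1' : v j1 = (k-1)*(ℓ-1) - 1 := hw1
      have he0 : j0 = i0 := hvinj j0 h0' i0 hi0n (by rw [hw0', hv0])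
      have he1 : j1 = i1 := hvinj j1 h1' i1 hi1n (by rw [hw1', hvmax])
      rw [he0, he1]
      exact hcase)
    intro i hi j hj
    rw [Finset.mem_Icc] at hi hj
    have hmn : (j-1)*(ℓ-1) + (i-1) < (k-1)*(ℓ-1) := by
      have hb : ((j-1) + 1) * (ℓ-1) ≤ (k-1) * (ℓ-1) := Nat.mul_le_mul_right _ (by omega)
      have hd : ((j-1) + 1) * (ℓ-1) = (j-1)*(ℓ-1) + (ℓ-1) := by ring
      omega
    obtain ⟨hdiv, hmod⟩ := hdm (j-1) (i-1) (by omega)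
    have hcm : v ((j-1)*(ℓ-1) + (i-1)) =
        ((ℓ-1) - 1 - ((j-1)*(ℓ-1) + (i-1)) % (ℓ-1)) * (k-1)
          + ((j-1)*(ℓ-1) + (i-1)) / (ℓ-1) :=
      hcore ((j-1)*(ℓ-1) + (i-1)) hmn
    rw [hdiv, hmod] at hcm
    have hidx : (j-1)*(ℓ-1)+i-1 = (j-1)*(ℓ-1) + (i-1) := by omega
    rw [hidx, hv1 _ hmn, hcm]
    have he : (ℓ-1) - 1 - (i-1) = ℓ-1-i := by omega
    rw [he]
    omega
  · -- case 2 : value n before value 1 : second pattern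
    right
    have hkey : v 0 < v ((k-1)*(ℓ-1) - 1) :=
      D.key (i0 := i0) (i1 := i1) hi0n hi1n hv0 hvmax hcase
    have hcore := D.swap.core (fun j0 j1 h0 h1 hw0 hw1 => by
      have h0' : j0 < (k-1)*(ℓ-1) := h0
      have h1' : j1 < (k-1)*(ℓ-1) := h1
      have hw0' : D.vinv j0 = 0 := hw0
      have hw1' : D.vinv j1 = (k-1)*(ℓ-1) - 1 := hw1
      have he0 : j0 = v 0 := by
        have hs := (D.vinv_spec (x := j0) h0').2
        rw [hw0'] at hs
        exact hs.symm
      have he1 : j1 = v ((k-1)*(ℓ-1) - 1) := by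
        have hs := (D.vinv_spec (x := j1) h1').2
        rw [hw1'] at hs
        exact hs.symm
      rw [he0, he1]
      exact hkey)
    intro i hi j hj
    rw [Finset.mem_Icc] at hi hj
    have hmn : (j-1)*(ℓ-1) + ((ℓ-1) - i) < (k-1)*(ℓ-1) := by
      have hb : ((j-1) + 1) * (ℓ-1) ≤ (k-1) * (ℓ-1) := Nat.mul_le_mul_right _ (by omega)
      have hd : ((j-1) + 1) * (ℓ-1) = (j-1)*(ℓ-1) + (ℓ-1) := by ring
      omega
    obtain ⟨hdiv, hmod⟩ := hdm (j-1) ((ℓ-1) - i) (by omega)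
    have hcm : D.vinv ((j-1)*(ℓ-1) + ((ℓ-1) - i)) =
        ((ℓ-1) - 1 - ((j-1)*(ℓ-1) + ((ℓ-1) - i)) % (ℓ-1)) * (k-1)
          + ((j-1)*(ℓ-1) + ((ℓ-1) - i)) / (ℓ-1) :=
      hcore ((j-1)*(ℓ-1) + ((ℓ-1) - i)) hmn
    rw [hdiv, hmod] at hcm
    have he : (ℓ-1) - 1 - ((ℓ-1) - i) = i - 1 := by omega
    rw [he] at hcm
    have happ : v ((i-1)*(k-1) + (j-1)) = (j-1)*(ℓ-1) + ((ℓ-1) - i) := by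
      have hs := (D.vinv_spec (x := (j-1)*(ℓ-1) + ((ℓ-1) - i)) hmn).2
      rw [hcm] at hs
      exact hs
    have hidx2 : (i-1)*(k-1)+j-1 = (i-1)*(k-1) + (j-1) := by omega
    have hmn2 : (i-1)*(k-1) + (j-1) < (k-1)*(ℓ-1) := by
      have hb : ((i-1) + 1) * (k-1) ≤ (ℓ-1) * (k-1) := Nat.mul_le_mul_right _ (by omega)
      have hd : ((i-1) + 1) * (k-1) = (i-1)*(k-1) + (k-1) := by ring
      have hc : (ℓ-1) * (k-1) = (k-1) * (ℓ-1) := Nat.mul_comm _ _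
      omega
    rw [hidx2, hv1 _ hmn2, happ]
    omega
end

section
/- Every cyclic permutation of {1,...,n} with n ≥ 3 that is not the increasing cyclic permutation (1,2,...,n) contains a decreasing cyclic sub-permutation of length 3, and every cyclic permutation of length n ≥ 3 that is not the decreasing cyclic permutation (n,n-1,...,1) contains an increasing cyclic sub-permutation of length 3. -/
lemma not_chain'_exists {R : ℕ → ℕ → Prop} : ∀ (l : List ℕ), ¬ l.Chain' R →
    ∃ a b, [a, b].Sublist l ∧ ¬ R a b
  | [], h => absurd List.isChain_nil h
  | [x], h => absurd (List.isChain_singleton x) h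
  | x :: y :: ys, h => by
    change ¬ List.IsChain R (x :: y :: ys) at h
    rw [List.isChain_cons_cons] at h
    push_neg at h
    by_cases hxy : R x y
    · obtain ⟨a, b, hs, hr⟩ := not_chain'_exists (y :: ys) (h hxy)
      exact ⟨a, b, hs.cons x, hr⟩
    · exact ⟨x, y, (List.cons_sublist_cons.mpr (List.cons_sublist_cons.mpr
        (List.nil_sublist ys))), hxy⟩

lemma rot_split' {l1 l2 : List ℕ} {a : ℕ} :
    (l1 ++ a :: l2).rotate l1.length = a :: (l2 ++ l1) := by
  rw [List.rotate_eq_drop_append_take (by simp), List.drop_left' rfl,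
    List.take_left' rfl]
  simp

lemma rot_split {l1 l2 : List ℕ} {a : ℕ} :
    (l1 ++ a :: l2).rotate (l1.length + 1) = (l2 ++ l1) ++ [a] := by
  have h : l1 ++ a :: l2 = (l1 ++ [a]) ++ l2 := by simp
  have hl : (l1 ++ [a]).length = l1.length + 1 := by simp
  rw [h, List.rotate_eq_drop_append_take (by simp), List.drop_left' hl,
    List.take_left' hl, List.append_assoc]

theorem non_monotone_has_three (n : ℕ) (hn : 3 ≤ n) (c : List ℕ)
    (hc : c.Perm (List.range' 1 n)) :
    (¬ c.IsRotated (List.range' 1 n) → DecCycSub c 3) ∧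
    (¬ c.IsRotated ((List.range' 1 n).reverse) → IncCycSub c 3) := by
  have hnd : c.Nodup := hc.nodup_iff.mpr List.nodup_range'
  have hmem : ∀ x ∈ c, 1 ≤ x ∧ x < n + 1 := by
    intro x hx
    have := hc.mem_iff.mp hx
    simp [List.mem_range'] at this
    omega
  have hsorted_range : (List.range' 1 n).Pairwise (· < ·) := by
    exact List.pairwise_lt_range'
  constructor
  · -- decreasing triple
    intro h
    have h1 : (1 : ℕ) ∈ c := hc.mem_iff.mpr (by simp [List.mem_range']; omega)
    obtain ⟨l1, l2, rfl⟩ := List.append_of_mem h1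
    set d0 := l2 ++ l1 with hd0
    have hnd1 : (1 :: d0).Nodup := by
      have := (List.rotate_perm (l1 ++ 1 :: l2) l1.length).nodup_iff.mpr hnd
      rwa [rot_split'] at this
    have hone : ∀ x ∈ d0, 1 < x := by
      intro x hx
      have hxc : x ∈ l1 ++ 1 :: l2 := by
        simp only [hd0, List.mem_append, List.mem_cons] at hx ⊢
        tauto
      have h1x := (hmem x hxc).1
      have : x ≠ 1 := fun he => (List.nodup_cons.mp hnd1).1 (he ▸ hx)
      omega
    by_cases hch : d0.Chain' (· < ·)
    · exfalso
      apply h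
      refine ⟨l1.length, ?_⟩
      rw [rot_split']
      have hperm : (1 :: d0).Perm (List.range' 1 n) := by
        have := List.rotate_perm (l1 ++ 1 :: l2) l1.length
        rw [rot_split'] at this
        exact this.trans hc
      haveI : Std.Antisymm (α := ℕ) (· < ·) := ⟨fun a b h1 h2 => absurd h1 (lt_asymm h2)⟩
      refine List.Perm.eq_of_pairwise' ?_ hsorted_range hperm
      rw [← List.isChain_iff_pairwise]
      exact List.isChain_cons.mpr ⟨fun y hy => hone y (List.mem_of_mem_head? hy), hch⟩
    · obtain ⟨a, b, hs, hr⟩ := not_chain'_exists d0 hch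
      have hab : b < a := by
        have hne : a ≠ b := by
          have := (hs.nodup (List.nodup_cons.mp hnd1).2)
          simp at this; exact this
        omega
      refine ⟨l1.length + 1, [a, b, 1], ?_, rfl, ?_⟩
      · rw [rot_split]
        exact hs.append (List.Sublist.refl [1])
      · have hb1 : 1 < b := hone b (hs.mem (by simp))
        simp [List.pairwise_cons]
        omega
  · -- increasing triple
    intro h
    have h1 : n ∈ c := hc.mem_iff.mpr (by simp [List.mem_range']; exact ⟨n-1, by omega, by omega⟩)
    obtain ⟨l1, l2, rfl⟩ := List.append_of_mem h1
    set d0 := l2 ++ l1 with hd0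
    have hnd1 : (n :: d0).Nodup := by
      have := (List.rotate_perm (l1 ++ n :: l2) l1.length).nodup_iff.mpr hnd
      rwa [rot_split'] at this
    have hone : ∀ x ∈ d0, x < n := by
      intro x hx
      have hxc : x ∈ l1 ++ n :: l2 := by
        simp only [hd0, List.mem_append, List.mem_cons] at hx ⊢
        tauto
      have h1x := (hmem x hxc).2
      have : x ≠ n := fun he => (List.nodup_cons.mp hnd1).1 (he ▸ hx)
      omega
    by_cases hch : d0.Chain' (· > ·)
    · exfalso
      apply h
      refine ⟨l1.length, ?_⟩
      rw [rot_split']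
      have hperm : (n :: d0).Perm ((List.range' 1 n).reverse) := by
        have := List.rotate_perm (l1 ++ n :: l2) l1.length
        rw [rot_split'] at this
        exact (this.trans hc).trans (List.reverse_perm _).symm
      haveI : Std.Antisymm (α := ℕ) (· > ·) := ⟨fun a b h1 h2 => absurd h1 (lt_asymm h2)⟩
      haveI : IsTrans ℕ (· > ·) := ⟨fun a b c h1 h2 => lt_trans h2 h1⟩
      refine List.Perm.eq_of_pairwise' (r := (· > ·)) ?_ ?_ hperm
      · rw [← List.isChain_iff_pairwise]
        exact List.isChain_cons.mpr ⟨fun y hy => hone y (List.mem_of_mem_head? hy), hch⟩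
      · rw [List.pairwise_reverse]
        exact hsorted_range
    · obtain ⟨a, b, hs, hr⟩ := not_chain'_exists d0 hch
      have hab : a < b := by
        have hne : a ≠ b := by
          have := (hs.nodup (List.nodup_cons.mp hnd1).2)
          simp at this; exact this
        simp at hr; omega
      refine ⟨l1.length + 1, [a, b, n], ?_, rfl, ?_⟩
      · rw [rot_split]
        exact hs.append (List.Sublist.refl [n])
      · have hb1 : b < n := hone b (hs.mem (by simp))
        simp [List.pairwise_cons]
        omega
end

section
/- Let a = [a_1,...,a_n] be a sequence of distinct numbers that is partitioned into k-1 decreasing blocks of consecutive entries, where each block consists of ℓ-1 consecutive entries of a (block i occupying positions (i-1)(ℓ-1)+1 through i(ℓ-1)), with n = (k-1)(ℓ-1). Then every increasing cyclic sub-permutation of the cyclic permutation (m, a_1, ..., a_n), where m is smaller than all a_t, has length at most k, provided it contains m; and any increasing cyclic sub-permutation avoiding m has length at most k as well. -/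
/-- Core counting lemma: if `g` is a monotone "block label" on positions of `c`
such that `c` is strictly decreasing within each label class, then any strictly
increasing sublist of `c` has length at most `U + 1 - L`, where `L, U` bound the
labels of positions of `c`. -/
lemma inc_bound (c s : List ℕ) (g : ℕ → ℕ) (L U : ℕ)
    (hs : s.Sublist c) (hsort : s.Pairwise (· < ·))
    (hg : Monotone g)
    (hdec : ∀ i j, i < j → j < c.length → g i = g j → c.getD j 0 < c.getD i 0)
    (hL : ∀ i, i < c.length → L ≤ g i) (hU : ∀ i, i < c.length → g i ≤ U) :
    s.length ≤ U + 1 - L := by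
  obtain ⟨f, hf⟩ := List.sublist_iff_exists_fin_orderEmbedding_get_eq.mp hs
  have hmono : ∀ i j : Fin s.length, i < j → g (f i) < g (f j) := by
    intro i j hij
    have hfij : (f i : ℕ) < (f j : ℕ) := f.strictMono hij
    have hle : g (f i) ≤ g (f j) := hg (le_of_lt hfij)
    rcases lt_or_eq_of_le hle with h | h
    · exact h
    · exfalso
      have hdec' := hdec (f i) (f j) hfij (f j).isLt h
      rw [List.getD_eq_getElem c 0 (f j).isLt, List.getD_eq_getElem c 0 (f i).isLt] at hdec'
      have hsv : s.get i < s.get j := hsort.sortedLT.strictMono_get hij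
      rw [hf i, hf j] at hsv
      simp only [List.get_eq_getElem] at hsv
      omega
  rcases Nat.eq_zero_or_pos s.length with h0 | hpos
  · omega
  · have hstep : ∀ v (hv : v < s.length),
        g (f ⟨0, hpos⟩) + v ≤ g (f ⟨v, hv⟩) := by
      intro v
      induction v with
      | zero => intro hv; simp
      | succ w ih =>
        intro hv
        have hw : w < s.length := by omega
        have h1 := ih hw
        have h2 := hmono ⟨w, hw⟩ ⟨w + 1, hv⟩ (by simp)
        omega
    have hlast : s.length - 1 < s.length := by omega
    have h1 := hstep (s.length - 1) hlast
    have h2 := hL (f ⟨0, hpos⟩) (f ⟨0, hpos⟩).isLt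
    have h3 := hU (f ⟨s.length - 1, hlast⟩) (f ⟨s.length - 1, hlast⟩).isLt
    omega

theorem blocks_bound_increasing (k ℓ : ℕ) (hk : 1 ≤ k) (hl : 1 ≤ ℓ)
    (a : List ℕ) (m : ℕ) (ha : a.length = (k-1)*(ℓ-1)) (hnd : a.Nodup)
    (hm : ∀ x ∈ a, m < x)
    (hblocks : ∀ i ∈ Finset.Icc 1 (k-1), ∀ t, (i-1)*(ℓ-1)+1 ≤ t → t < i*(ℓ-1) →
      a.getD t 0 < a.getD (t-1) 0) :
    ∀ (r : ℕ) (s : List ℕ), s.Sublist ((m :: a).rotate r) → s.Pairwise (· < ·) → s.length ≤ k := by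
  intro r s hs hsort
  -- trivial case: `a` is empty
  rcases Nat.eq_zero_or_pos a.length with hn0 | hn
  · have haeq : a = [] := List.length_eq_zero_iff.mp hn0
    subst haeq
    rw [List.rotate_singleton] at hs
    have := hs.length_le
    simp at this
    omega
  -- now `k ≥ 2` and `ℓ ≥ 2`
  have hk2 : 2 ≤ k := by
    rcases Nat.lt_or_ge k 2 with h | h
    · interval_cases k <;> simp_all
    · exact h
  have hl2 : 2 ≤ ℓ := by
    rcases Nat.lt_or_ge ℓ 2 with h | h
    · interval_cases ℓ <;> simp_all
    · exact h
  set P := ℓ - 1 with hP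
  have hPpos : 0 < P := by omega
  have han : a.length = (k-1) * P := ha
  -- adjacent decrease within a block
  have hadj : ∀ t, 0 < t → t < a.length → t % P ≠ 0 → a.getD t 0 < a.getD (t-1) 0 := by
    intro t ht hlt hmod
    have hq : P * (t / P) + t % P = t := Nat.div_add_mod t P
    have hmlt : t % P < P := Nat.mod_lt t hPpos
    have hqlt : t / P < k - 1 := (Nat.div_lt_iff_lt_mul hPpos).mpr (by omega)
    have h1 : (t / P + 1 - 1) * P + 1 ≤ t := by
      rw [Nat.add_sub_cancel, Nat.mul_comm]
      omega
    have h2 : t < (t / P + 1) * P := by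
      have he : (t / P + 1) * P = P * (t / P) + P := by ring
      omega
    exact hblocks (t / P + 1) (Finset.mem_Icc.mpr ⟨Nat.le_add_left 1 _, by omega⟩) t h1 h2
  -- decrease within a block at distance
  have hchain : ∀ v u, u < v → v < a.length → u / P = v / P →
      a.getD v 0 < a.getD u 0 := by
    intro v
    induction v with
    | zero => omega
    | succ w ih =>
      intro u hu hv hq
      have hw1 : P * ((w+1) / P) + (w+1) % P = w + 1 := Nat.div_add_mod _ _
      have hu1 : P * (u / P) + u % P = u := Nat.div_add_mod _ _
      have hum : u % P < P := Nat.mod_lt _ hPpos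
      have hwm : (w+1) % P < P := Nat.mod_lt _ hPpos
      have hvm : (w+1) % P ≠ 0 := by
        intro h
        rw [hq] at hu1
        omega
      have hstep := hadj (w+1) (Nat.succ_pos w) hv hvm
      simp only [Nat.add_sub_cancel] at hstep
      rcases Nat.lt_or_ge u w with h | h
      · have hw0 : P * (w / P) + w % P = w := Nat.div_add_mod _ _
        have hwm0 : w % P < P := Nat.mod_lt _ hPpos
        have hle : w / P ≤ (w+1) / P := Nat.div_le_div_right (by omega)
        have hge : (w+1) / P ≤ w / P := by
          apply (Nat.le_div_iff_mul_le hPpos).mpr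
          have hc : ((w+1) / P) * P = P * ((w+1) / P) := Nat.mul_comm _ _
          omega
        have hwq : u / P = w / P := by omega
        exact lt_trans hstep (ih u h (by omega) hwq)
      · have : u = w := by omega
        subst this
        exact hstep
  -- decompose the rotation
  obtain ⟨d, hd, heq⟩ : ∃ d, d ≤ a.length ∧
      (m :: a).rotate r = a.drop d ++ m :: a.take d := by
    have hlen : (m :: a).length = a.length + 1 := by simp
    have hrot : (m :: a).rotate r = (m :: a).rotate (r % (a.length + 1)) := by
      rw [← hlen, List.rotate_mod]
    have hr'lt : r % (a.length + 1) < a.length + 1 := Nat.mod_lt _ (by omega)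
    rcases Nat.eq_zero_or_pos (r % (a.length + 1)) with h0 | hpos
    · refine ⟨a.length, le_refl _, ?_⟩
      rw [hrot, h0, List.rotate_zero, List.drop_length, List.take_length]
      simp
    · obtain ⟨e, he⟩ : ∃ e, r % (a.length + 1) = e + 1 :=
        ⟨r % (a.length + 1) - 1, by omega⟩
      refine ⟨e, by omega, ?_⟩
      rw [hrot, List.rotate_eq_drop_append_take (by rw [hlen]; omega), he]
      simp [List.drop_succ_cons, List.take_succ_cons]
  rw [heq] at hs
  obtain ⟨s₁, s₂, hsplit, hs₁, hs₂⟩ := List.sublist_append_iff.mp hs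
  -- bound on the first part (sublist of `a.drop d`)
  have hbound₁ : s₁.length ≤ (k - 2) + 1 - d / P := by
    have hsort₁ : s₁.Pairwise (· < ·) := by
      rw [hsplit] at hsort; exact (List.pairwise_append.mp hsort).1
    have hmono₁ : Monotone (fun i => (i + d) / P) :=
      fun i j hij => Nat.div_le_div_right (by omega)
    have hdec₁ : ∀ i j, i < j → j < (a.drop d).length →
        (i + d) / P = (j + d) / P →
        (a.drop d).getD j 0 < (a.drop d).getD i 0 := by
      intro i j hij hj hg
      have hj' : j < (a.drop d).length := hj
      have hi' : i < (a.drop d).length := by omega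
      have hjl : j < a.length - d := by simpa using hj
      rw [List.getD_eq_getElem _ 0 hj', List.getD_eq_getElem _ 0 hi',
        List.getElem_drop, List.getElem_drop]
      have hch := hchain (d + j) (d + i) (by omega) (by omega)
        (by simpa [Nat.add_comm d i, Nat.add_comm d j] using hg)
      rw [List.getD_eq_getElem _ 0 (by omega), List.getD_eq_getElem _ 0 (by omega)] at hch
      exact hch
    have hL₁ : ∀ i, i < (a.drop d).length → d / P ≤ (i + d) / P :=
      fun i _ => Nat.div_le_div_right (by omega)
    have hU₁ : ∀ i, i < (a.drop d).length → (i + d) / P ≤ k - 2 := by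
      intro i hi
      have hil : i < a.length - d := by simpa using hi
      have : (i + d) / P < k - 1 := (Nat.div_lt_iff_lt_mul hPpos).mpr (by omega)
      omega
    exact inc_bound (a.drop d) s₁ (fun i => (i + d) / P) (d / P) (k - 2)
      hs₁ hsort₁ hmono₁ hdec₁ hL₁ hU₁
  -- bound on increasing sublists of `a.take d`
  have htake_bound : ∀ t : List ℕ, t.Sublist (a.take d) → t.Pairwise (· < ·) →
      t.length ≤ (d - 1) / P + 1 := by
    intro t ht htsort
    have hlen : (a.take d).length = d := by
      rw [List.length_take]; omega
    have hdec₂ : ∀ i j, i < j → j < (a.take d).length → i / P = j / P →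
        (a.take d).getD j 0 < (a.take d).getD i 0 := by
      intro i j hij hj hg
      have hi' : i < (a.take d).length := by omega
      rw [List.getD_eq_getElem _ 0 hj, List.getD_eq_getElem _ 0 hi',
        List.getElem_take, List.getElem_take]
      have hjd : j < d := by rwa [hlen] at hj
      have hch := hchain j i hij (by omega) hg
      rw [List.getD_eq_getElem _ 0 (by omega), List.getD_eq_getElem _ 0 (by omega)] at hch
      exact hch
    have hU₂ : ∀ i, i < (a.take d).length → i / P ≤ (d - 1) / P := by
      intro i hi
      rw [hlen] at hi
      exact Nat.div_le_div_right (by omega)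
    have := inc_bound (a.take d) t (fun i => i / P) 0 ((d - 1) / P) ht htsort
      (fun i j hij => Nat.div_le_div_right hij) hdec₂ (fun i _ => Nat.zero_le _) hU₂
    simpa using this
  have hdd : (d - 1) / P ≤ d / P := Nat.div_le_div_right (by omega)
  have hdk : (d - 1) / P ≤ k - 2 := by
    have : (d - 1) / P < k - 1 := (Nat.div_lt_iff_lt_mul hPpos).mpr (by omega)
    omega
  rcases List.sublist_cons_iff.mp hs₂ with h | ⟨t, hteq, ht⟩
  · -- m ∉ s₂ : s₂ is a sublist of a.take d
    have hb₂ : s₂.length ≤ (d - 1) / P + 1 := htake_bound s₂ h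
      (by rw [hsplit] at hsort; exact (List.pairwise_append.mp hsort).2.1)
    have hlen : s.length = s₁.length + s₂.length := by rw [hsplit]; simp
    generalize hg1 : (d - 1) / P = D1 at hdd hdk hb₂
    generalize hg2 : d / P = D2 at hdd hbound₁
    omega
  · -- m ∈ s₂ : then s₁ = [] and s₂ = m :: t
    have hs₁nil : s₁ = [] := by
      rcases s₁ with _ | ⟨x, s₁'⟩
      · rfl
      · exfalso
        rw [hsplit, hteq] at hsort
        have hxm : x < m := (List.pairwise_append.mp hsort).2.2 x (by simp) m (by simp)
        have hxa : x ∈ a := by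
          have : x ∈ a.drop d := hs₁.mem (by simp)
          exact (List.drop_sublist d a).mem this
        have := hm x hxa
        omega
    have hbt : t.length ≤ (d - 1) / P + 1 := by
      apply htake_bound t ht
      rw [hsplit, hteq, hs₁nil] at hsort
      simp only [List.nil_append] at hsort
      exact hsort.tail
    have hlen : s.length = t.length + 1 := by
      rw [hsplit, hteq, hs₁nil]; simp
    generalize hg1 : (d - 1) / P = D1 at hdk hbt
    omega
end
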